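/- arXiv:2502.15166 — 3 statements merged into one kernel-verified Lean document; each statement's English description precedes it below -/
import Mathlib

section
/- Consider the heart-shaped poset M = {(i,j) in N^2 : (i < a0 and j < a1) or (i < b0 and j < b1)} with componentwise order, where b0 < a0, a1 < b1, a0 >= b1, a0 + a1 >= b0 + b1, and a1 + b0 > b1. Then M is Macaulay with respect to the lexicographic order with y > x (i.e., (i,j) < (i',j') in the total order iff i+j < i'+j' or (i+j = i'+j' and j < j')). -/
open Finset

instance {α : Type*} [Fintype α] : Fintype (WithBot α) := inferInstanceAs (Fintype (Option α))
instance {α : Type*} [Fintype α] : Fintype (WithTop α) := inferInstanceAs (Fintype (Option α))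

variable {α : Type*}

open Classical in
noncomputable def shadow [PartialOrder α] [Fintype α] (A : Finset α) : Finset α :=
  Finset.univ.filter (fun b => ∃ a ∈ A, a ⋖ b)

def IsRankFn [PartialOrder α] (rank : α → ℕ) : Prop :=
  (∃ x, rank x = 0 ∧ ∀ y, x ≤ y) ∧ ∀ a b : α, a ⋖ b → rank b = rank a + 1

def IsInitSeg [PartialOrder α] (rank : α → ℕ) (lt : α → α → Prop) (d : ℕ)
    (S : Finset α) : Prop :=
  (∀ x ∈ S, rank x = d) ∧ ∀ a ∈ S, ∀ b, rank b = d → lt a b → b ∈ S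

def MacaulayWith [PartialOrder α] [Fintype α] (rank : α → ℕ)
    (lt : α → α → Prop) : Prop :=
  IsTrichotomous α lt ∧ IsTrans α lt ∧ IsIrrefl α lt ∧
  (∀ d (A S : Finset α), (∀ x ∈ A, rank x = d) → IsInitSeg rank lt d S →
    S.card = A.card → (shadow S).card ≤ (shadow A).card) ∧
  (∀ d (S : Finset α), IsInitSeg rank lt d S → IsInitSeg rank lt (d + 1) (shadow S))

def IsMacaulay [PartialOrder α] [Fintype α] (rank : α → ℕ) : Prop :=
  ∃ lt : α → α → Prop, MacaulayWith rank lt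

abbrev Wedge (P Q : Type*) [PartialOrder P] [PartialOrder Q] [OrderBot P] [OrderBot Q] :=
  WithBot ({p : P // p ≠ ⊥} ⊕ {q : Q // q ≠ ⊥})

def wedgeRank {P Q : Type*} [PartialOrder P] [PartialOrder Q] [OrderBot P] [OrderBot Q]
    (rP : P → ℕ) (rQ : Q → ℕ) : Wedge P Q → ℕ :=
  WithBot.recBotCoe 0 (Sum.elim (fun p => rP p.1) (fun q => rQ q.1))

open Classical in
noncomputable def wedgeInl {P Q : Type*} [PartialOrder P] [PartialOrder Q] [OrderBot P]
    [OrderBot Q] (p : P) : Wedge P Q :=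
  if h : p = ⊥ then ⊥ else
    ((Sum.inl ⟨p, h⟩ : {p : P // p ≠ ⊥} ⊕ {q : Q // q ≠ ⊥}) : Wedge P Q)

open Classical in
noncomputable def wedgeInr {P Q : Type*} [PartialOrder P] [PartialOrder Q] [OrderBot P]
    [OrderBot Q] (q : Q) : Wedge P Q :=
  if h : q = ⊥ then ⊥ else
    ((Sum.inr ⟨q, h⟩ : {p : P // p ≠ ⊥} ⊕ {q : Q // q ≠ ⊥}) : Wedge P Q)

abbrev Diamond (P Q : Type*) [PartialOrder P] [PartialOrder Q] [OrderBot P] [OrderBot Q]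
    [OrderTop P] [OrderTop Q] :=
  WithBot (WithTop ({p : P // p ≠ ⊥ ∧ p ≠ ⊤} ⊕ {q : Q // q ≠ ⊥ ∧ q ≠ ⊤}))

def diamondRank {P Q : Type*} [PartialOrder P] [PartialOrder Q] [OrderBot P] [OrderBot Q]
    [OrderTop P] [OrderTop Q] (rP : P → ℕ) (rQ : Q → ℕ) (s : ℕ) : Diamond P Q → ℕ :=
  WithBot.recBotCoe 0 (WithTop.recTopCoe s (Sum.elim (fun p => rP p.1) (fun q => rQ q.1)))

def diamondInl {P Q : Type*} [PartialOrder P] [PartialOrder Q] [OrderBot P] [OrderBot Q]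
    [OrderTop P] [OrderTop Q] (p : {p : P // p ≠ ⊥ ∧ p ≠ ⊤}) : Diamond P Q :=
  (((Sum.inl p : {p : P // p ≠ ⊥ ∧ p ≠ ⊤} ⊕ {q : Q // q ≠ ⊥ ∧ q ≠ ⊤}) :
    WithTop ({p : P // p ≠ ⊥ ∧ p ≠ ⊤} ⊕ {q : Q // q ≠ ⊥ ∧ q ≠ ⊤})) : Diamond P Q)

abbrev Box (a b : ℕ) := Fin a × Fin b

def boxRank {a b : ℕ} : Box a b → ℕ := fun p => p.1.val + p.2.val

abbrev BoxF {n : ℕ} (d : Fin n → ℕ) := ∀ i, Fin (d i + 1)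

def boxFRank {n : ℕ} {d : Fin n → ℕ} : BoxF d → ℕ := fun x => ∑ i, (x i).val

def diamondInr {P Q : Type*} [PartialOrder P] [PartialOrder Q] [OrderBot P] [OrderBot Q]
    [OrderTop P] [OrderTop Q] (q : {q : Q // q ≠ ⊥ ∧ q ≠ ⊤}) : Diamond P Q :=
  (((Sum.inr q : {p : P // p ≠ ⊥ ∧ p ≠ ⊤} ⊕ {q : Q // q ≠ ⊥ ∧ q ≠ ⊤}) :
    WithTop ({p : P // p ≠ ⊥ ∧ p ≠ ⊤} ⊕ {q : Q // q ≠ ⊥ ∧ q ≠ ⊤})) : Diamond P Q)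

abbrev WedgeFam {ι : Type*} (P : ι → Type*) [∀ i, PartialOrder (P i)]
    [∀ i, OrderBot (P i)] :=
  WithBot (Σ i, {p : P i // p ≠ ⊥})

def wedgeFamRank {ι : Type*} {P : ι → Type*} [∀ i, PartialOrder (P i)]
    [∀ i, OrderBot (P i)] (rank : ∀ i, P i → ℕ) : WedgeFam P → ℕ :=
  WithBot.recBotCoe 0 (fun s => rank s.1 s.2.1)

abbrev DiamondFam {ι : Type*} (P : ι → Type*) [∀ i, PartialOrder (P i)]
    [∀ i, OrderBot (P i)] [∀ i, OrderTop (P i)] :=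
  WithBot (WithTop (Σ i, {p : P i // p ≠ ⊥ ∧ p ≠ ⊤}))

def diamondFamRank {ι : Type*} {P : ι → Type*} [∀ i, PartialOrder (P i)]
    [∀ i, OrderBot (P i)] [∀ i, OrderTop (P i)] (rank : ∀ i, P i → ℕ) (s : ℕ) :
    DiamondFam P → ℕ :=
  WithBot.recBotCoe 0 (WithTop.recTopCoe s (fun x => rank x.1 x.2.1))

/-- The heart-shaped poset: the monomial poset of K[x,y]/((x^a0,y^a1) ∩ (x^b0,y^b1)). -/
abbrev Heart (a0 a1 b0 b1 : ℕ) :=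
  {p : Fin (max a0 b0) × Fin (max a1 b1) //
    (p.1.val < a0 ∧ p.2.val < a1) ∨ (p.1.val < b0 ∧ p.2.val < b1)}

def heartRank {a0 a1 b0 b1 : ℕ} : Heart a0 a1 b0 b1 → ℕ := fun p => p.1.1.val + p.1.2.val

/-- The lexicographic order with y > x on the heart-shaped poset: compare by rank, then by
the exponent of y. -/
def heartLexLt {a0 a1 b0 b1 : ℕ} (x y : Heart a0 a1 b0 b1) : Prop :=
  heartRank x < heartRank y ∨ (heartRank x = heartRank y ∧ x.1.2.val < y.1.2.val)


set_option maxHeartbeats 1000000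

namespace HeartAux

variable {a0 a1 b0 b1 : ℕ}

def ii (p : Heart a0 a1 b0 b1) : ℕ := p.1.1.val
def jj (p : Heart a0 a1 b0 b1) : ℕ := p.1.2.val

lemma mem_prop (p : Heart a0 a1 b0 b1) :
    (ii p < a0 ∧ jj p < a1) ∨ (ii p < b0 ∧ jj p < b1) := p.2

lemma rank_eq (p : Heart a0 a1 b0 b1) : heartRank p = ii p + jj p := rfl

def mkH (i j : ℕ) (h : (i < a0 ∧ j < a1) ∨ (i < b0 ∧ j < b1)) : Heart a0 a1 b0 b1 :=
  ⟨(⟨i, by omega⟩, ⟨j, by omega⟩), h⟩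

@[simp] lemma ii_mkH (i j h) : ii (mkH (a0 := a0) (a1 := a1) (b0 := b0) (b1 := b1) i j h) = i := rfl
@[simp] lemma jj_mkH (i j h) : jj (mkH (a0 := a0) (a1 := a1) (b0 := b0) (b1 := b1) i j h) = j := rfl

lemma ext_heart {p q : Heart a0 a1 b0 b1} (hi : ii p = ii q) (hj : jj p = jj q) : p = q := by
  apply Subtype.ext
  apply Prod.ext <;> apply Fin.ext <;> assumption

lemma ext_rank_jj {p q : Heart a0 a1 b0 b1} (hr : heartRank p = heartRank q)
    (hj : jj p = jj q) : p = q := by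
  apply ext_heart _ hj
  rw [rank_eq, rank_eq] at hr; omega

lemma le_iff {p q : Heart a0 a1 b0 b1} : p ≤ q ↔ ii p ≤ ii q ∧ jj p ≤ jj q := Iff.rfl

lemma lt_rank {p q : Heart a0 a1 b0 b1} (h : p < q) : heartRank p < heartRank q := by
  obtain ⟨hle, hne⟩ := lt_iff_le_and_ne.mp h
  rw [le_iff] at hle
  rw [rank_eq, rank_eq]
  rcases Nat.lt_or_ge (ii p + jj p) (ii q + jj q) with h' | h'
  · exact h'
  · exact absurd (ext_heart (by omega) (by omega)) hne

lemma covby_iff {p q : Heart a0 a1 b0 b1} :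
    p ⋖ q ↔ p ≤ q ∧ heartRank q = heartRank p + 1 := by
  constructor
  · intro h
    have hle : p ≤ q := h.1.le
    refine ⟨hle, ?_⟩
    by_contra hr
    have hrlt := lt_rank h.1
    rw [le_iff] at hle
    rw [rank_eq, rank_eq] at hr hrlt
    -- rank q ≥ rank p + 2
    have key : ∀ r s : Heart a0 a1 b0 b1, r ≤ s → heartRank r < heartRank s → r < s :=
      fun r s hle' hr' => lt_iff_le_and_ne.mpr ⟨hle', fun he => by rw [he] at hr'; omega⟩
    rcases Nat.lt_or_ge (ii p) (ii q) with hi | hi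
    · set c : Heart a0 a1 b0 b1 := mkH (ii p + 1) (jj p) (by
        have := mem_prop q; omega) with hc
      have hrc : heartRank c = ii p + 1 + jj p := rfl
      refine h.2 (c := c) ?_ ?_
      · exact key _ _ (le_iff.mpr (by simp only [hc, ii_mkH, jj_mkH]; omega))
          (by rw [rank_eq p, hrc]; omega)
      · exact key _ _ (le_iff.mpr (by simp only [hc, ii_mkH, jj_mkH]; omega))
          (by rw [rank_eq q, hrc]; omega)
    · have hj : jj p + 2 ≤ jj q := by omega
      set c : Heart a0 a1 b0 b1 := mkH (ii p) (jj p + 1) (by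
        have := mem_prop q; omega) with hc
      have hrc : heartRank c = ii p + (jj p + 1) := rfl
      refine h.2 (c := c) ?_ ?_
      · exact key _ _ (le_iff.mpr (by simp only [hc, ii_mkH, jj_mkH]; omega))
          (by rw [rank_eq p, hrc]; omega)
      · exact key _ _ (le_iff.mpr (by simp only [hc, ii_mkH, jj_mkH]; omega))
          (by rw [rank_eq q, hrc]; omega)
  · rintro ⟨hle, hr⟩
    have hlt : p < q := lt_iff_le_and_ne.mpr ⟨hle, fun he => by rw [he] at hr; omega⟩
    refine ⟨hlt, fun c hc1 hc2 => ?_⟩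
    have := lt_rank hc1
    have := lt_rank hc2
    omega

lemma mem_shadow {A : Finset (Heart a0 a1 b0 b1)} {b : Heart a0 a1 b0 b1} :
    b ∈ _root_.shadow A ↔ ∃ a ∈ A, a ⋖ b := by
  simp only [_root_.shadow, Finset.mem_filter, Finset.mem_univ, true_and]

end HeartAux



namespace HeartAux

variable {a0 a1 b0 b1 : ℕ}

def Ld (a0 a1 b0 b1 d : ℕ) : Finset ℕ :=
  (Finset.range (d+1)).filter (fun j => (d - j < a0 ∧ j < a1) ∨ (d - j < b0 ∧ j < b1))

lemma mem_Ld {d j : ℕ} :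
    j ∈ Ld a0 a1 b0 b1 d ↔ j ≤ d ∧ ((d - j < a0 ∧ j < a1) ∨ (d - j < b0 ∧ j < b1)) := by
  simp [Ld, Nat.lt_succ_iff]

lemma jj_mem_Ld {d : ℕ} {p : Heart a0 a1 b0 b1} (hd : heartRank p = d) :
    jj p ∈ Ld a0 a1 b0 b1 d := by
  have hm := mem_prop p
  rw [rank_eq] at hd
  rw [mem_Ld]
  omega

variable {d : ℕ} {A S : Finset (Heart a0 a1 b0 b1)}

lemma injOn_jj (hA : ∀ x ∈ A, heartRank x = d) : Set.InjOn jj (A : Set (Heart a0 a1 b0 b1)) :=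
  fun p hp q hq h => ext_rank_jj (by rw [hA p hp, hA q hq]) h

lemma card_image_jj (hA : ∀ x ∈ A, heartRank x = d) : (A.image jj).card = A.card :=
  Finset.card_image_of_injOn (injOn_jj hA)

lemma image_jj_sub (hA : ∀ x ∈ A, heartRank x = d) : A.image jj ⊆ Ld a0 a1 b0 b1 d := by
  intro j hj
  obtain ⟨p, hp, rfl⟩ := Finset.mem_image.mp hj
  exact jj_mem_Ld (hA p hp)

lemma shadow_rank (hA : ∀ x ∈ A, heartRank x = d) :
    ∀ b ∈ _root_.shadow A, heartRank b = d + 1 := by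
  intro b hb
  obtain ⟨a, ha, hab⟩ := mem_shadow.mp hb
  rw [(covby_iff.mp hab).2, hA a ha]

lemma shadow_image (hA : ∀ x ∈ A, heartRank x = d) :
    (_root_.shadow A).image jj =
      ((A.image jj) ∪ (A.image jj).image (· + 1)) ∩ Ld a0 a1 b0 b1 (d+1) := by
  ext j
  simp only [Finset.mem_image, Finset.mem_inter, Finset.mem_union]
  constructor
  · rintro ⟨b, hb, rfl⟩
    obtain ⟨a, ha, hab⟩ := mem_shadow.mp hb
    have hc := covby_iff.mp hab
    have hrb : heartRank b = d + 1 := by rw [hc.2, hA a ha]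
    have hle := le_iff.mp hc.1
    have hra := hA a ha
    refine ⟨?_, jj_mem_Ld hrb⟩
    rw [rank_eq] at hra hrb
    have hjj : jj b = jj a ∨ jj b = jj a + 1 := by omega
    rcases hjj with h | h
    · exact Or.inl ⟨a, ha, h.symm⟩
    · exact Or.inr ⟨jj a, ⟨a, ha, rfl⟩, h.symm⟩
  · rintro ⟨hj1, hj2⟩
    have hm := mem_Ld.mp hj2
    set b : Heart a0 a1 b0 b1 := mkH (d+1-j) j hm.2 with hbdef
    have hrb : heartRank b = d + 1 := by
      rw [rank_eq]
      simp only [hbdef, ii_mkH, jj_mkH]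
      omega
    rcases hj1 with ⟨a, ha, hja⟩ | ⟨x, ⟨a, ha, hax⟩, hxj⟩
    · have hra : ii a + jj a = d := by rw [← rank_eq, hA a ha]
      refine ⟨b, mem_shadow.mpr ⟨a, ha, covby_iff.mpr
        ⟨le_iff.mpr ?_, by rw [hrb, hA a ha]⟩⟩, rfl⟩
      simp only [hbdef, ii_mkH, jj_mkH]
      omega
    · have hra : ii a + jj a = d := by rw [← rank_eq, hA a ha]
      refine ⟨b, mem_shadow.mpr ⟨a, ha, covby_iff.mpr
        ⟨le_iff.mpr ?_, by rw [hrb, hA a ha]⟩⟩, rfl⟩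
      simp only [hbdef, ii_mkH, jj_mkH]
      omega

def upIn (L T : Finset ℕ) : Prop := ∀ j ∈ T, ∀ j' ∈ L, j ≤ j' → j' ∈ T

lemma initseg_image_up (hS : IsInitSeg heartRank heartLexLt d S) :
    upIn (Ld a0 a1 b0 b1 d) (S.image jj) := by
  intro j hj j' hj' hle
  obtain ⟨p, hp, rfl⟩ := Finset.mem_image.mp hj
  rcases Nat.eq_or_lt_of_le hle with rfl | hlt
  · exact hj
  · have hm := mem_Ld.mp hj'
    set q : Heart a0 a1 b0 b1 := mkH (d - j') j' hm.2 with hq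
    have hm2 := mem_Ld.mp hj'
    have hrq : heartRank q = d := by
      rw [rank_eq]
      simp only [hq, ii_mkH, jj_mkH]
      omega
    have hjq : jj q = j' := rfl
    have hlt' : heartLexLt p q := Or.inr ⟨by rw [hrq, hS.1 p hp], hlt⟩
    exact Finset.mem_image.mpr ⟨q, hS.2 p hp q hrq hlt', hjq⟩

end HeartAux


/-- Card of union with shift is at least card + 1 for nonempty sets. -/
lemma card_union_shift (A : Finset ℕ) (h : A.Nonempty) :
    A.card + 1 ≤ (A ∪ A.image (· + 1)).card := by
  have hmax : A.max' h + 1 ∈ A.image (· + 1) := Finset.mem_image_of_mem _ (A.max'_mem h)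
  have hnot : A.max' h + 1 ∉ A := fun hc => by
    have := Finset.le_max' A _ hc; omega
  have hsub : insert (A.max' h + 1) A ⊆ A ∪ A.image (· + 1) := by
    intro x hx
    rcases Finset.mem_insert.mp hx with rfl | hx
    · exact Finset.mem_union_right _ hmax
    · exact Finset.mem_union_left _ hx
  calc A.card + 1 = (insert (A.max' h + 1) A).card := (Finset.card_insert_of_notMem hnot).symm
    _ ≤ _ := Finset.card_le_card hsub

/-- Lemma A: shadow lower bound for a subset of an interval. -/
lemma lemA (A : Finset ℕ) (l l' e : ℕ) (hA : A ⊆ Finset.Ico l e) (h1 : l ≤ l') (h2 : l' ≤ l + 1) :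
    min A.card (e - l') ≤ ((A ∪ A.image (· + 1)) ∩ Finset.Ico l' e).card := by
  by_cases hfull : Finset.Ico l e ⊆ A
  · have hsub : Finset.Ico l' e ⊆ (A ∪ A.image (· + 1)) ∩ Finset.Ico l' e := by
      intro j hj
      rw [Finset.mem_Ico] at hj
      refine Finset.mem_inter.mpr ⟨Finset.mem_union_left _ (hfull ?_), Finset.mem_Ico.mpr hj⟩
      rw [Finset.mem_Ico]; omega
    have := Finset.card_le_card hsub
    simp only [Nat.card_Ico] at this
    omega
  · -- there is a hole c
    rw [Finset.not_subset] at hfull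
    obtain ⟨c, hc, hcA⟩ := hfull
    rw [Finset.mem_Ico] at hc
    have hinj : Set.InjOn (fun j => if j < c then j + 1 else j) A := by
      intro x hx y hy hxy
      have hxc : x ≠ c := fun h => hcA (h ▸ hx)
      have hyc : y ≠ c := fun h => hcA (h ▸ hy)
      by_cases hx' : x < c <;> by_cases hy' : y < c <;> simp [hx', hy'] at hxy <;> omega
    have hmaps : ∀ j ∈ A, (if j < c then j + 1 else j) ∈ (A ∪ A.image (· + 1)) ∩ Finset.Ico l' e := by
      intro j hj
      have hji := Finset.mem_Ico.mp (hA hj)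
      have hjc : j ≠ c := fun h => hcA (h ▸ hj)
      by_cases hj' : j < c
      · simp only [if_pos hj']
        exact Finset.mem_inter.mpr ⟨Finset.mem_union_right _ (Finset.mem_image_of_mem _ hj),
          Finset.mem_Ico.mpr (by omega)⟩
      · simp only [if_neg hj']
        exact Finset.mem_inter.mpr ⟨Finset.mem_union_left _ hj,
          Finset.mem_Ico.mpr (by omega)⟩
    have := Finset.card_le_card_of_injOn _ hmaps hinj
    omega

/-- Lemma C: an upward-closed subset of Ico x y is a top interval. -/
lemma lemC (T : Finset ℕ) (x y : ℕ) (hT : T ⊆ Finset.Ico x y)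
    (hup : ∀ j ∈ T, ∀ j' ∈ Finset.Ico x y, j ≤ j' → j' ∈ T) :
    T = Finset.Ico (y - T.card) y := by
  rcases T.eq_empty_or_nonempty with rfl | hne
  · simp
  · have hmin := T.min'_mem hne
    have hmini := Finset.mem_Ico.mp (hT hmin)
    have heq : T = Finset.Ico (T.min' hne) y := by
      apply Finset.Subset.antisymm
      · intro t ht
        have := Finset.min'_le T t ht
        have := Finset.mem_Ico.mp (hT ht)
        rw [Finset.mem_Ico]; omega
      · intro j hj
        rw [Finset.mem_Ico] at hj
        exact hup _ hmin j (Finset.mem_Ico.mpr (by omega)) hj.1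
    have hcard : T.card = y - T.min' hne := by
      conv_lhs => rw [heq]
      simp
    have h2 : y - (y - T.min' hne) = T.min' hne := by omega
    rw [hcard, h2, ← heq]

namespace HeartAux

section Core
variable {a0 a1 b0 b1 : ℕ}

lemma Ld_lo (h1 : b0 < a0) (h2 : a1 < b1) (h3 : b1 ≤ a0) (h4 : b0 + b1 ≤ a0 + a1) (h5 : b1 < a1 + b0)
    {d : ℕ} (hd : d < b1) :
    Ld a0 a1 b0 b1 d = Finset.Ico 0 (d+1) := by
  ext j; rw [mem_Ld, Finset.mem_Ico]; omega

lemma Ld_hi (h1 : b0 < a0) (h2 : a1 < b1) (h3 : b1 ≤ a0) (h4 : b0 + b1 ≤ a0 + a1) (h5 : b1 < a1 + b0)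
    {d : ℕ} (hd : b1 ≤ d + 1) :
    Ld a0 a1 b0 b1 d = Finset.Ico (d+1-a0) a1 ∪ Finset.Ico (max a1 (d+1-b0)) b1 := by
  ext j; rw [mem_Ld]; simp only [Finset.mem_union, Finset.mem_Ico]; omega

/-- Case I: the simplex zone. -/
lemma caseI (h1 : b0 < a0) (h2 : a1 < b1) (h3 : b1 ≤ a0) (h4 : b0 + b1 ≤ a0 + a1) (h5 : b1 < a1 + b0)
    {d : ℕ} (hd : d + 2 ≤ b1) (JS : Finset ℕ) (hJS : JS ⊆ Ld a0 a1 b0 b1 d)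
    (hup : upIn (Ld a0 a1 b0 b1 d) JS) (hk : 1 ≤ JS.card) :
    (JS ∪ JS.image (· + 1)) ∩ Ld a0 a1 b0 b1 (d+1) = Finset.Ico (d+1-JS.card) (d+2) := by
  have hL : Ld a0 a1 b0 b1 d = Finset.Ico 0 (d+1) := Ld_lo h1 h2 h3 h4 h5 (by omega)
  have hL' : Ld a0 a1 b0 b1 (d+1) = Finset.Ico 0 (d+2) := Ld_lo h1 h2 h3 h4 h5 (by omega)
  rw [hL] at hJS hup
  have hkle : JS.card ≤ d + 1 := by
    have := Finset.card_le_card hJS; simpa using this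
  have hJSeq : JS = Finset.Ico (d+1-JS.card) (d+1) := lemC JS 0 (d+1) hJS hup
  rw [hL']
  conv_lhs => rw [hJSeq]
  rw [Finset.image_add_right_Ico]
  ext x
  simp only [Finset.mem_inter, Finset.mem_union, Finset.mem_Ico]
  omega

/-- Case II.1 : single-interval zone. -/
lemma caseII1 (h1 : b0 < a0) (h2 : a1 < b1) (h3 : b1 ≤ a0) (h4 : b0 + b1 ≤ a0 + a1) (h5 : b1 < a1 + b0)
    {d : ℕ} (hd1 : b1 ≤ d + 1) (hd2 : d + 2 ≤ a1 + b0)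
    (JS : Finset ℕ) (hJS : JS ⊆ Ld a0 a1 b0 b1 d) (hup : upIn (Ld a0 a1 b0 b1 d) JS) :
    (JS ∪ JS.image (· + 1)) ∩ Ld a0 a1 b0 b1 (d+1)
      = Finset.Ico (max (b1 - JS.card) (d+2-a0)) b1 := by
  have hL : Ld a0 a1 b0 b1 d = Finset.Ico (d+1-a0) b1 := by
    rw [Ld_hi h1 h2 h3 h4 h5 hd1]
    ext x
    simp only [Finset.mem_union, Finset.mem_Ico]
    omega
  have hL' : Ld a0 a1 b0 b1 (d+1) = Finset.Ico (d+2-a0) b1 := by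
    rw [Ld_hi h1 h2 h3 h4 h5 (by omega)]
    ext x
    simp only [Finset.mem_union, Finset.mem_Ico]
    omega
  rw [hL] at hJS hup
  have hkle : JS.card ≤ b1 - (d+1-a0) := by
    have := Finset.card_le_card hJS; simpa using this
  have hJSeq : JS = Finset.Ico (b1 - JS.card) b1 := lemC JS (d+1-a0) b1 hJS hup
  rw [hL']
  conv_lhs => rw [hJSeq]
  rw [Finset.image_add_right_Ico]
  ext x
  simp only [Finset.mem_inter, Finset.mem_union, Finset.mem_Ico]
  omega

/-- Case II.2 : two-lobe zone. -/
lemma caseII2 (h1 : b0 < a0) (h2 : a1 < b1) (h3 : b1 ≤ a0) (h4 : b0 + b1 ≤ a0 + a1) (h5 : b1 < a1 + b0)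
    {d : ℕ} (hd1 : b1 ≤ d + 1) (hd2 : a1 + b0 ≤ d + 1)
    (JS : Finset ℕ) (hJS : JS ⊆ Ld a0 a1 b0 b1 d) (hup : upIn (Ld a0 a1 b0 b1 d) JS) :
    ∃ p q, p + q = JS.card ∧ p = min JS.card (b1 - (d+1-b0)) ∧
      (JS ∪ JS.image (· + 1)) ∩ Ld a0 a1 b0 b1 (d+1)
        = Finset.Ico (max (a1-q) (d+2-a0)) a1 ∪ Finset.Ico (max (b1-p) (d+2-b0)) b1 := by
  have hL : Ld a0 a1 b0 b1 d = Finset.Ico (d+1-a0) a1 ∪ Finset.Ico (d+1-b0) b1 := by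
    rw [Ld_hi h1 h2 h3 h4 h5 hd1, max_eq_right (by omega)]
  have hL' : Ld a0 a1 b0 b1 (d+1) = Finset.Ico (d+2-a0) a1 ∪ Finset.Ico (d+2-b0) b1 := by
    rw [Ld_hi h1 h2 h3 h4 h5 (by omega), max_eq_right (by omega)]
  set SL := JS ∩ Finset.Ico (d+1-a0) a1 with hSL
  set SU := JS ∩ Finset.Ico (d+1-b0) b1 with hSU
  have hsplit : JS = SL ∪ SU := by
    rw [hSL, hSU, ← Finset.inter_union_distrib_left, ← hL]
    exact (Finset.inter_eq_left.mpr hJS).symm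
  have hdisj : Disjoint SL SU := by
    rw [Finset.disjoint_left]
    intro x hx hx'
    have := (Finset.mem_Ico.mp (Finset.mem_inter.mp hx).2)
    have := (Finset.mem_Ico.mp (Finset.mem_inter.mp hx').2)
    omega
  have hcards : SL.card + SU.card = JS.card := by
    rw [hsplit, Finset.card_union_of_disjoint hdisj]
  have hq_le : SL.card ≤ a1 - (d+1-a0) := by
    have := Finset.card_le_card (show SL ⊆ Finset.Ico (d+1-a0) a1 from Finset.inter_subset_right)
    simpa using this
  have hp_le : SU.card ≤ b1 - (d+1-b0) := by
    have := Finset.card_le_card (show SU ⊆ Finset.Ico (d+1-b0) b1 from Finset.inter_subset_right)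
    simpa using this
  have hSUeq : SU = Finset.Ico (b1 - SU.card) b1 := by
    apply lemC SU (d+1-b0) b1 Finset.inter_subset_right
    intro j hj j' hj' hle
    refine Finset.mem_inter.mpr ⟨?_, hj'⟩
    exact hup j (Finset.mem_inter.mp hj).1 j' (by rw [hL]; exact Finset.mem_union_right _ hj') hle
  have hSLeq : SL = Finset.Ico (a1 - SL.card) a1 := by
    apply lemC SL (d+1-a0) a1 Finset.inter_subset_right
    intro j hj j' hj' hle
    refine Finset.mem_inter.mpr ⟨?_, hj'⟩
    exact hup j (Finset.mem_inter.mp hj).1 j' (by rw [hL]; exact Finset.mem_union_left _ hj') hle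
  have hpmin : SU.card = min JS.card (b1 - (d+1-b0)) := by
    rcases Nat.eq_zero_or_pos SL.card with h0 | hpos
    · have : SL = ∅ := Finset.card_eq_zero.mp h0
      omega
    · -- SL nonempty forces SU to be everything
      obtain ⟨j, hj⟩ := Finset.card_pos.mp hpos
      have hfull : Finset.Ico (d+1-b0) b1 ⊆ SU := by
        intro j'' hj''
        refine Finset.mem_inter.mpr ⟨?_, hj''⟩
        have hjlt := Finset.mem_Ico.mp (Finset.mem_inter.mp hj).2
        have hj2 := Finset.mem_Ico.mp hj''
        exact hup j (Finset.mem_inter.mp hj).1 j''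
          (by rw [hL]; exact Finset.mem_union_right _ hj'') (by omega)
      have : (Finset.Ico (d+1-b0) b1).card ≤ SU.card := Finset.card_le_card hfull
      simp only [Nat.card_Ico] at this
      omega
  refine ⟨SU.card, SL.card, by omega, hpmin, ?_⟩
  rw [hL']
  conv_lhs => rw [hsplit, hSLeq, hSUeq]
  rw [Finset.image_union, Finset.image_add_right_Ico, Finset.image_add_right_Ico]
  ext x
  simp only [Finset.mem_inter, Finset.mem_union, Finset.mem_Ico]
  omega


end Core
end HeartAux

namespace HeartAux
section Core
variable {a0 a1 b0 b1 : ℕ}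


/-- Main arithmetic inequality for case II.2. -/
lemma arith_main (a0 a1 b0 b1 d p q cAL cAU k P1 P2 : ℕ)
    (h1 : b0 < a0) (h2 : a1 < b1) (h4 : b0+b1 ≤ a0+a1) (hc2 : a1 + b0 ≤ d + 1)
    (hpq : p + q = k) (hpmin : p = min k (b1 - (d+1-b0)))
    (hcards : cAL + cAU = k) (hq_le : cAL ≤ a1-(d+1-a0)) (hp_le : cAU ≤ b1-(d+1-b0))
    (hb1 : min cAL (a1-(d+2-a0)) ≤ P1) (hb2 : min cAU (b1-(d+2-b0)) ≤ P2) :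
    (a1 - max (a1-q) (d+2-a0)) + (b1 - max (b1-p) (d+2-b0)) ≤ P1 + P2 := by
  omega

/-- Arithmetic for upward closure in case II.2. -/
lemma arith5 (a0 a1 b0 b1 d p q k j j' : ℕ) (hc2 : a1 + b0 ≤ d + 1)
    (hpq : p + q = k) (hpmin : p = min k (b1 - (d+1-b0)))
    (hj : (max (a1-q) (d+2-a0) ≤ j ∧ j < a1) ∨ (max (b1-p) (d+2-b0) ≤ j ∧ j < b1))
    (hj' : (d+2-a0 ≤ j' ∧ j' < a1) ∨ (max a1 (d+2-b0) ≤ j' ∧ j' < b1))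
    (hle : j ≤ j') :
    (max (a1-q) (d+2-a0) ≤ j' ∧ j' < a1) ∨ (max (b1-p) (d+2-b0) ≤ j' ∧ j' < b1) := by
  omega

/-- Minimality of shadows of initial segments, at the level of j-sets. -/
lemma part4_nat (h1 : b0 < a0) (h2 : a1 < b1) (h3 : b1 ≤ a0) (h4 : b0 + b1 ≤ a0 + a1) (h5 : b1 < a1 + b0)
    {d : ℕ} (JA JS : Finset ℕ) (hJA : JA ⊆ Ld a0 a1 b0 b1 d)
    (hJS : JS ⊆ Ld a0 a1 b0 b1 d) (hup : upIn (Ld a0 a1 b0 b1 d) JS)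
    (hk : JS.card = JA.card) :
    ((JS ∪ JS.image (· + 1)) ∩ Ld a0 a1 b0 b1 (d+1)).card
      ≤ ((JA ∪ JA.image (· + 1)) ∩ Ld a0 a1 b0 b1 (d+1)).card := by
  rcases Nat.eq_zero_or_pos JS.card with h0 | hpos
  · have : JS = ∅ := Finset.card_eq_zero.mp h0
    simp [this]
  by_cases hc1 : d + 2 ≤ b1
  · -- Case I
    rw [caseI h1 h2 h3 h4 h5 hc1 JS hJS hup hpos]
    have hL : Ld a0 a1 b0 b1 d = Finset.Ico 0 (d+1) := Ld_lo h1 h2 h3 h4 h5 (by omega)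
    have hL' : Ld a0 a1 b0 b1 (d+1) = Finset.Ico 0 (d+2) := Ld_lo h1 h2 h3 h4 h5 (by omega)
    rw [hL] at hJA
    have hkle : JS.card ≤ d + 1 := by
      have := Finset.card_le_card hJS
      rw [hL] at this
      simpa using this
    have hsub : JA ∪ JA.image (· + 1) ⊆ Ld a0 a1 b0 b1 (d+1) := by
      rw [hL']
      intro x hx
      rcases Finset.mem_union.mp hx with hx | hx
      · have := Finset.mem_Ico.mp (hJA hx); rw [Finset.mem_Ico]; omega
      · obtain ⟨y, hy, rfl⟩ := Finset.mem_image.mp hx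
        have := Finset.mem_Ico.mp (hJA hy); rw [Finset.mem_Ico]; omega
    rw [Finset.inter_eq_left.mpr hsub]
    have hne : JA.Nonempty := Finset.card_pos.mp (by omega)
    have := card_union_shift JA hne
    simp only [Nat.card_Ico]
    omega
  · by_cases hc2 : d + 2 ≤ a1 + b0
    · -- Case II.1
      rw [caseII1 h1 h2 h3 h4 h5 (by omega) hc2 JS hJS hup]
      have hL : Ld a0 a1 b0 b1 d = Finset.Ico (d+1-a0) b1 := by
        rw [Ld_hi h1 h2 h3 h4 h5 (by omega)]
        ext x
        simp only [Finset.mem_union, Finset.mem_Ico]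
        omega
      have hL' : Ld a0 a1 b0 b1 (d+1) = Finset.Ico (d+2-a0) b1 := by
        rw [Ld_hi h1 h2 h3 h4 h5 (by omega)]
        ext x
        simp only [Finset.mem_union, Finset.mem_Ico]
        omega
      rw [hL] at hJA
      have hkle : JS.card ≤ b1 - (d+1-a0) := by
        have := Finset.card_le_card hJS
        rw [hL] at this
        simpa using this
      have := lemA JA (d+1-a0) (d+2-a0) b1 hJA (by omega) (by omega)
      rw [← hL'] at this
      simp only [Nat.card_Ico]
      omega
    · -- Case II.2
      obtain ⟨p, q, hpq, hpmin, hset⟩ :=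
        caseII2 h1 h2 h3 h4 h5 (by omega) (by omega) JS hJS hup
      rw [hset]
      have hL : Ld a0 a1 b0 b1 d = Finset.Ico (d+1-a0) a1 ∪ Finset.Ico (d+1-b0) b1 := by
        rw [Ld_hi h1 h2 h3 h4 h5 (by omega), max_eq_right (by omega)]
      have hL' : Ld a0 a1 b0 b1 (d+1)
          = Finset.Ico (d+2-a0) a1 ∪ Finset.Ico (d+2-b0) b1 := by
        rw [Ld_hi h1 h2 h3 h4 h5 (by omega), max_eq_right (by omega)]
      set AL := JA ∩ Finset.Ico (d+1-a0) a1 with hAL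
      set AU := JA ∩ Finset.Ico (d+1-b0) b1 with hAU
      have hsplit : JA = AL ∪ AU := by
        rw [hAL, hAU, ← Finset.inter_union_distrib_left, ← hL]
        exact (Finset.inter_eq_left.mpr hJA).symm
      have hdisjA : Disjoint AL AU := by
        rw [Finset.disjoint_left]
        intro x hx hx'
        have := (Finset.mem_Ico.mp (Finset.mem_inter.mp hx).2)
        have := (Finset.mem_Ico.mp (Finset.mem_inter.mp hx').2)
        omega
      have hcards : AL.card + AU.card = JA.card := by
        rw [hsplit, Finset.card_union_of_disjoint hdisjA]
      have hqA_le : AL.card ≤ a1 - (d+1-a0) := by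
        have := Finset.card_le_card (show AL ⊆ Finset.Ico (d+1-a0) a1 from Finset.inter_subset_right)
        simpa using this
      have hpA_le : AU.card ≤ b1 - (d+1-b0) := by
        have := Finset.card_le_card (show AU ⊆ Finset.Ico (d+1-b0) b1 from Finset.inter_subset_right)
        simpa using this
      have hbound1 := lemA AL (d+1-a0) (d+2-a0) a1 Finset.inter_subset_right
        (by omega) (by omega)
      have hbound2 := lemA AU (d+1-b0) (d+2-b0) b1 Finset.inter_subset_right
        (by omega) (by omega)
      -- the two shadow pieces sit disjointly inside the shadow of JA
      set P1 := (AL ∪ AL.image (· + 1)) ∩ Finset.Ico (d+2-a0) a1 with hP1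
      set P2 := (AU ∪ AU.image (· + 1)) ∩ Finset.Ico (d+2-b0) b1 with hP2
      have hdisjP : Disjoint P1 P2 := by
        rw [Finset.disjoint_left]
        intro x hx hx'
        have := Finset.mem_Ico.mp (Finset.mem_inter.mp hx).2
        have := Finset.mem_Ico.mp (Finset.mem_inter.mp hx').2
        omega
      have hPsub : P1 ∪ P2 ⊆ (JA ∪ JA.image (· + 1)) ∩ Ld a0 a1 b0 b1 (d+1) := by
        intro x hx
        rw [hL']
        rcases Finset.mem_union.mp hx with hx | hx
        · obtain ⟨hx1, hx2⟩ := Finset.mem_inter.mp hx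
          refine Finset.mem_inter.mpr ⟨?_, Finset.mem_union_left _ hx2⟩
          rcases Finset.mem_union.mp hx1 with h | h
          · exact Finset.mem_union_left _ ((Finset.inter_subset_left) h)
          · obtain ⟨y, hy, rfl⟩ := Finset.mem_image.mp h
            exact Finset.mem_union_right _
              (Finset.mem_image_of_mem _ ((Finset.inter_subset_left) hy))
        · obtain ⟨hx1, hx2⟩ := Finset.mem_inter.mp hx
          refine Finset.mem_inter.mpr ⟨?_, Finset.mem_union_right _ hx2⟩
          rcases Finset.mem_union.mp hx1 with h | h
          · exact Finset.mem_union_left _ ((Finset.inter_subset_left) h)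
          · obtain ⟨y, hy, rfl⟩ := Finset.mem_image.mp h
            exact Finset.mem_union_right _
              (Finset.mem_image_of_mem _ ((Finset.inter_subset_left) hy))
      have hcardP : P1.card + P2.card
          ≤ ((JA ∪ JA.image (· + 1)) ∩ Ld a0 a1 b0 b1 (d+1)).card := by
        rw [← Finset.card_union_of_disjoint hdisjP]
        exact Finset.card_le_card hPsub
      have hLHS : (Finset.Ico (max (a1-q) (d+2-a0)) a1
          ∪ Finset.Ico (max (b1-p) (d+2-b0)) b1).card
          = (a1 - max (a1-q) (d+2-a0)) + (b1 - max (b1-p) (d+2-b0)) := by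
        rw [Finset.card_union_of_disjoint]
        · simp [Nat.card_Ico]
        · rw [Finset.disjoint_left]
          intro x hx hx'
          have := Finset.mem_Ico.mp hx
          have := Finset.mem_Ico.mp hx'
          omega
      rw [hLHS]
      refine le_trans (arith_main a0 a1 b0 b1 d p q AL.card AU.card JS.card P1.card P2.card
        h1 h2 h4 (by omega) hpq hpmin (by omega) hqA_le hpA_le hbound1 hbound2) hcardP

/-- The shadow of an initial segment is an initial segment, at the level of j-sets. -/
lemma part5_nat (h1 : b0 < a0) (h2 : a1 < b1) (h3 : b1 ≤ a0) (h4 : b0 + b1 ≤ a0 + a1) (h5 : b1 < a1 + b0)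
    {d : ℕ} (JS : Finset ℕ) (hJS : JS ⊆ Ld a0 a1 b0 b1 d)
    (hup : upIn (Ld a0 a1 b0 b1 d) JS) :
    upIn (Ld a0 a1 b0 b1 (d+1)) ((JS ∪ JS.image (· + 1)) ∩ Ld a0 a1 b0 b1 (d+1)) := by
  rcases Nat.eq_zero_or_pos JS.card with h0 | hpos
  · have : JS = ∅ := Finset.card_eq_zero.mp h0
    subst this
    intro j hj
    simp at hj
  by_cases hc1 : d + 2 ≤ b1
  · rw [caseI h1 h2 h3 h4 h5 hc1 JS hJS hup hpos, Ld_lo h1 h2 h3 h4 h5 (by omega)]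
    intro j hj j' hj' hle
    rw [Finset.mem_Ico] at *
    omega
  · by_cases hc2 : d + 2 ≤ a1 + b0
    · rw [caseII1 h1 h2 h3 h4 h5 (by omega) hc2 JS hJS hup,
        Ld_hi h1 h2 h3 h4 h5 (by omega)]
      intro j hj j' hj' hle
      rw [Finset.mem_Ico] at hj ⊢
      simp only [Finset.mem_union, Finset.mem_Ico] at hj'
      omega
    · obtain ⟨p, q, hpq, hpmin, hset⟩ :=
        caseII2 h1 h2 h3 h4 h5 (by omega) (by omega) JS hJS hup
      rw [hset, Ld_hi h1 h2 h3 h4 h5 (by omega)]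
      intro j hj j' hj' hle
      simp only [Finset.mem_union, Finset.mem_Ico] at hj hj' ⊢
      exact arith5 a0 a1 b0 b1 d p q JS.card j j' (by omega) hpq hpmin hj hj' hle

end Core
end HeartAux

set_option maxHeartbeats 2000000

open HeartAux in
/-- In the case b0 < a0, a1 < b1, a0 ≥ b1, a0 + a1 ≥ b0 + b1 and a1 + b0 > b1, the
heart-shaped poset is Macaulay with respect to the lexicographic order with y > x. -/
theorem stmt16 (a0 a1 b0 b1 : ℕ) (h1 : b0 < a0) (h2 : a1 < b1) (h3 : b1 ≤ a0)
    (h4 : b0 + b1 ≤ a0 + a1) (h5 : b1 < a1 + b0) :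
    MacaulayWith (heartRank (a0 := a0) (a1 := a1) (b0 := b0) (b1 := b1))
      heartLexLt := by
  refine ⟨?_, ?_, ?_, ?_, ?_⟩
  · constructor
    intro a b hab hba
    rcases Nat.lt_trichotomy (heartRank a) (heartRank b) with h | h | h
    · exact absurd (Or.inl h) hab
    · rcases Nat.lt_trichotomy (jj a) (jj b) with h' | h' | h'
      · exact absurd (Or.inr ⟨h, h'⟩) hab
      · exact ext_rank_jj h h'
      · exact absurd (Or.inr ⟨h.symm, h'⟩) hba
    · exact absurd (Or.inl h) hba
  · constructor
    intro a b c hab hbc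
    rcases hab with h | ⟨h, hj⟩ <;> rcases hbc with g | ⟨g, gj⟩
    · exact Or.inl (by omega)
    · exact Or.inl (by omega)
    · exact Or.inl (by omega)
    · exact Or.inr ⟨by omega, by omega⟩
  · constructor
    intro a h
    rcases h with h | ⟨h, hj⟩ <;> omega
  · -- shadow minimality
    intro d A S hA hS hcard
    have hSd := hS.1
    have hmain := part4_nat h1 h2 h3 h4 h5 (JA := A.image jj) (JS := S.image jj)
      (image_jj_sub hA) (image_jj_sub hSd) (initseg_image_up hS)
      (by rw [card_image_jj hSd, card_image_jj hA, hcard])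
    calc (_root_.shadow S).card
        = ((_root_.shadow S).image jj).card := (card_image_jj (shadow_rank hSd)).symm
      _ = ((S.image jj ∪ (S.image jj).image (· + 1)) ∩ Ld a0 a1 b0 b1 (d+1)).card := by
          rw [shadow_image hSd]
      _ ≤ ((A.image jj ∪ (A.image jj).image (· + 1)) ∩ Ld a0 a1 b0 b1 (d+1)).card := hmain
      _ = ((_root_.shadow A).image jj).card := by rw [← shadow_image hA]
      _ = (_root_.shadow A).card := card_image_jj (shadow_rank hA)
  · -- shadow of initial segment is initial segment
    intro d S hS
    refine ⟨shadow_rank hS.1, ?_⟩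
    intro x hx b hb hlt
    have hx' : heartRank x = d + 1 := shadow_rank hS.1 x hx
    have hjlt : jj x < jj b := by
      rcases hlt with h | h
      · rw [hx', hb] at h; exact absurd h (lt_irrefl _)
      · exact h.2
    have hup5 := part5_nat h1 h2 h3 h4 h5 (S.image jj) (image_jj_sub hS.1)
      (initseg_image_up hS)
    have hxj : jj x ∈ (S.image jj ∪ (S.image jj).image (· + 1)) ∩ Ld a0 a1 b0 b1 (d+1) := by
      rw [← shadow_image hS.1]
      exact Finset.mem_image_of_mem jj hx
    have hbj : jj b ∈ Ld a0 a1 b0 b1 (d+1) := jj_mem_Ld hb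
    have hres := hup5 (jj x) hxj (jj b) hbj (le_of_lt hjlt)
    rw [← shadow_image hS.1] at hres
    obtain ⟨c, hc, hcb⟩ := Finset.mem_image.mp hres
    have hcb' : c = b := ext_rank_jj (by rw [shadow_rank hS.1 c hc, hb]) hcb
    rwa [← hcb']
end

section
/- Consider the heart-shaped poset M = {(i,j) in N^2 : (i < a0 and j < a1) or (i < b0 and j < b1)} with componentwise order, where b0 < a0, a1 < b1, a0 >= b1, a0 + a1 >= b0 + b1, and a1 + b0 <= b1. Then M is Macaulay with respect to the twist order with y > x. -/
open Finset

variable {α : Type*}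

/-- The twist order with y > x on the heart-shaped poset: compare by rank; within a rank,
elements with y-exponent < a1 are smaller than those with y-exponent ≥ a1; among the former
compare by y-exponent, among the latter by reversed y-exponent. -/
def heartTwistLt {a0 b0 b1 : ℕ} (a1 : ℕ) (x y : Heart a0 a1 b0 b1) : Prop :=
  heartRank x < heartRank y ∨ (heartRank x = heartRank y ∧
    ((x.1.2.val < a1 ∧ y.1.2.val < a1 ∧ x.1.2.val < y.1.2.val) ∨
     (x.1.2.val < a1 ∧ a1 ≤ y.1.2.val) ∨
     (a1 ≤ x.1.2.val ∧ a1 ≤ y.1.2.val ∧ y.1.2.val < x.1.2.val)))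

namespace HeartN
variable (a0 a1 b0 b1 : ℕ)

def pp (d : ℕ) : ℕ := d + 1 - a0
def pq (a1 : ℕ) (d : ℕ) : ℕ := min a1 (d+1)
def ps (a1 b0 : ℕ) (d : ℕ) : ℕ := max a1 (d + 1 - b0)
def pt (b1 : ℕ) (d : ℕ) : ℕ := min b1 (d+1)

def Jd (d : ℕ) : Finset ℕ := Ico (pp a0 d) (pq a1 d) ∪ Ico (ps a1 b0 d) (pt b1 d)

def tlt (a1 : ℕ) (j j' : ℕ) : Prop :=
  (j < a1 ∧ j' < a1 ∧ j < j') ∨ (j < a1 ∧ a1 ≤ j') ∨ (a1 ≤ j ∧ a1 ≤ j' ∧ j' < j)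

def UpSet (d : ℕ) (S : Finset ℕ) : Prop :=
  S ⊆ Jd a0 a1 b0 b1 d ∧ ∀ j ∈ S, ∀ j' ∈ Jd a0 a1 b0 b1 d, tlt a1 j j' → j' ∈ S

def up (A : Finset ℕ) : Finset ℕ := A ∪ A.image (· + 1)

def shJ (d : ℕ) (A : Finset ℕ) : Finset ℕ := up A ∩ Jd a0 a1 b0 b1 (d+1)

def n1 (d : ℕ) : ℕ := pt b1 d - ps a1 b0 d
def n0 (d : ℕ) : ℕ := pq a1 d - pp a0 d

def seg (d k : ℕ) : Finset ℕ :=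
  Ico (ps a1 b0 d) (ps a1 b0 d + min k (n1 a1 b0 b1 d)) ∪
  Ico (pq a1 d - (k - n1 a1 b0 b1 d)) (pq a1 d)

lemma mem_up {A : Finset ℕ} {j : ℕ} : j ∈ up A ↔ j ∈ A ∨ (1 ≤ j ∧ j - 1 ∈ A) := by
  simp only [up, mem_union, mem_image]
  constructor
  · rintro (h | ⟨i, hi, rfl⟩)
    · exact Or.inl h
    · exact Or.inr ⟨by omega, by simpa using hi⟩
  · rintro (h | ⟨h1, h2⟩)
    · exact Or.inl h
    · exact Or.inr ⟨j - 1, h2, by omega⟩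

lemma mem_Jd {d j : ℕ} : j ∈ Jd a0 a1 b0 b1 d ↔
    (pp a0 d ≤ j ∧ j < pq a1 d) ∨ (ps a1 b0 d ≤ j ∧ j < pt b1 d) := by
  simp [Jd, mem_union, mem_Ico]

lemma card_Jd {d : ℕ} : (Jd a0 a1 b0 b1 d).card = n0 a0 a1 d + n1 a1 b0 b1 d := by
  rw [Jd, card_union_of_disjoint, Nat.card_Ico, Nat.card_Ico]
  · rfl
  · rw [Finset.disjoint_left]
    intro j hj hj'
    simp only [mem_Ico] at hj hj'
    simp only [pp, pq, ps, pt] at *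
    omega

lemma mem_seg {d k j : ℕ} : j ∈ seg a1 b0 b1 d k ↔
    (ps a1 b0 d ≤ j ∧ j < ps a1 b0 d + min k (n1 a1 b0 b1 d)) ∨
    (pq a1 d - (k - n1 a1 b0 b1 d) ≤ j ∧ j < pq a1 d) := by
  simp [seg, mem_union, mem_Ico]

lemma seg_card {d k : ℕ} (hk : k ≤ (Jd a0 a1 b0 b1 d).card) :
    (seg a1 b0 b1 d k).card = k := by
  rw [card_Jd] at hk
  rw [seg, card_union_of_disjoint, Nat.card_Ico, Nat.card_Ico]
  · simp only [pp, pq, ps, pt, n0, n1] at *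
    omega
  · rw [Finset.disjoint_left]
    intro j hj hj'
    simp only [mem_Ico] at hj hj'
    simp only [pp, pq, ps, pt, n0, n1] at *
    omega

lemma seg_subset {d k : ℕ} (hk : k ≤ (Jd a0 a1 b0 b1 d).card) :
    seg a1 b0 b1 d k ⊆ Jd a0 a1 b0 b1 d := by
  rw [card_Jd] at hk
  intro j hj
  rw [mem_seg] at hj
  rw [mem_Jd]
  simp only [pp, pq, ps, pt, n0, n1] at *
  omega

lemma seg_upset {d k : ℕ} (hk : k ≤ (Jd a0 a1 b0 b1 d).card) :
    UpSet a0 a1 b0 b1 d (seg a1 b0 b1 d k) := by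
  refine ⟨seg_subset a0 a1 b0 b1 hk, ?_⟩
  rw [card_Jd] at hk
  intro j hj j' hj' ht
  rw [mem_seg] at hj ⊢
  rw [mem_Jd] at hj'
  unfold tlt at ht
  simp only [pp, pq, ps, pt, n0, n1] at *
  omega

lemma upset_unique {d : ℕ} {S T : Finset ℕ} (hS : UpSet a0 a1 b0 b1 d S)
    (hT : UpSet a0 a1 b0 b1 d T) (hc : S.card = T.card) : S = T := by
  have key : ∀ S T : Finset ℕ, UpSet a0 a1 b0 b1 d S → UpSet a0 a1 b0 b1 d T →
      S.card ≤ T.card → S ⊆ T := by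
    intro S T hS hT hle
    by_contra hsub
    obtain ⟨x, hxS, hxT⟩ : ∃ x ∈ S, x ∉ T := by
      simpa [Finset.subset_iff] using hsub
    have hTS : T ⊆ S := by
      intro y hy
      have hyJ := hT.1 hy
      have hxJ := hS.1 hxS
      have htri : tlt a1 x y ∨ x = y ∨ tlt a1 y x := by unfold tlt; omega
      rcases htri with h | h | h
      · exact hS.2 x hxS y hyJ h
      · exact (hxT (h ▸ hy)).elim
      · exact (hxT (hT.2 y hy x hxJ h)).elim
    have : T ⊂ S := ⟨hTS, fun h => hxT (h hxS)⟩
    have := Finset.card_lt_card this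
    omega
  exact Finset.Subset.antisymm (key S T hS hT (le_of_eq hc)) (key T S hT hS (ge_of_eq hc))

lemma upset_eq_seg {d : ℕ} {S : Finset ℕ} (hS : UpSet a0 a1 b0 b1 d S) :
    S = seg a1 b0 b1 d S.card := by
  have hk : S.card ≤ (Jd a0 a1 b0 b1 d).card := Finset.card_le_card hS.1
  exact upset_unique a0 a1 b0 b1 hS (seg_upset a0 a1 b0 b1 hk)
    (seg_card a0 a1 b0 b1 hk).symm

lemma card_up {A : Finset ℕ} (hA : A.Nonempty) : A.card + 1 ≤ (up A).card := by
  have h1 : insert (A.min' hA) (A.image (· + 1)) ⊆ up A := by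
    intro j hj
    rcases Finset.mem_insert.1 hj with rfl | hj
    · exact Finset.mem_union_left _ (A.min'_mem hA)
    · exact Finset.mem_union_right _ hj
  have h2 : A.min' hA ∉ A.image (· + 1) := by
    simp only [mem_image]
    rintro ⟨i, hi, hie⟩
    have := A.min'_le i hi
    omega
  calc A.card + 1 = (insert (A.min' hA) (A.image (· + 1))).card := by
        rw [Finset.card_insert_of_notMem h2, Finset.card_image_of_injective _
          (fun x y h => by omega)]
      _ ≤ (up A).card := Finset.card_le_card h1

lemma card_shrink {A : Finset ℕ} {a b : ℕ} (hA : A ⊆ Finset.Ico a b) :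
    A.card ≤ (up A ∩ Finset.Ico (a+1) b).card + 1 ∧
    (A ≠ Finset.Ico a b → A.card ≤ (up A ∩ Finset.Ico (a+1) b).card) := by
  constructor
  · have hsub : A \ {a} ⊆ up A ∩ Finset.Ico (a+1) b := by
      intro j hj
      rw [Finset.mem_sdiff, Finset.mem_singleton] at hj
      have := hA hj.1
      rw [mem_Ico] at this
      refine Finset.mem_inter.2 ⟨Finset.mem_union_left _ hj.1, ?_⟩
      rw [mem_Ico]; omega
    have := Finset.card_le_card hsub
    have h2 : A.card ≤ (A \ {a}).card + 1 := by
      have hsub2 : A ⊆ (A \ {a}) ∪ {a} := by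
        intro x hx
        by_cases hxa : x = a
        · exact Finset.mem_union_right _ (by simp [hxa])
        · exact Finset.mem_union_left _ (Finset.mem_sdiff.2 ⟨hx, by simp [hxa]⟩)
      have := Finset.card_le_card hsub2
      have := Finset.card_union_le (A \ {a}) ({a} : Finset ℕ)
      simp only [Finset.card_singleton] at this
      omega
    omega
  · intro hne
    by_cases ha : a ∈ A
    · -- there is a gap g
      have hss : A ⊂ Finset.Ico a b := ⟨hA, fun h => hne (Finset.Subset.antisymm hA h)⟩
      obtain ⟨g, hgI, hgA⟩ := Finset.exists_of_ssubset hss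
      rw [mem_Ico] at hgI
      have hB : (A.filter (· < g)).image (· + 1) ∪ A.filter (fun x => g ≤ x)
          ⊆ up A ∩ Finset.Ico (a+1) b := by
        intro j hj
        rcases Finset.mem_union.1 hj with hj | hj
        · simp only [mem_image, mem_filter] at hj
          obtain ⟨i, ⟨hiA, hig⟩, rfl⟩ := hj
          have hig2 : i < g := hig
          have hia := hA hiA; rw [mem_Ico] at hia
          refine Finset.mem_inter.2 ⟨Finset.mem_union_right _ ?_, ?_⟩
          · exact Finset.mem_image.2 ⟨i, hiA, rfl⟩
          · rw [mem_Ico]; omega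
        · rw [mem_filter] at hj
          obtain ⟨hjA, hgj⟩ := hj
          have hgj2 : g ≤ j := hgj
          have hja := hA hjA; rw [mem_Ico] at hja
          have : j ≠ g := fun h => hgA (h ▸ hjA)
          have : g ≠ a := fun h => hgA (h ▸ ha)
          refine Finset.mem_inter.2 ⟨Finset.mem_union_left _ hjA, ?_⟩
          rw [mem_Ico]; omega
      have hdisj : Disjoint ((A.filter (· < g)).image (· + 1)) (A.filter (fun x => g ≤ x)) := by
        rw [Finset.disjoint_left]
        intro j hj hj'
        simp only [mem_image, mem_filter] at hj hj'
        obtain ⟨i, ⟨_, hig⟩, rfl⟩ := hj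
        have hig2 : i < g := hig
        have hgj2 : g ≤ i + 1 := hj'.2
        have hjA : i + 1 ∈ A := hj'.1
        have hne2 : i + 1 ≠ g := fun h => hgA (h ▸ hjA)
        omega
      have hcard : ((A.filter (· < g)).image (· + 1) ∪ A.filter (fun x => g ≤ x)).card
          = A.card := by
        rw [Finset.card_union_of_disjoint hdisj, Finset.card_image_of_injective _
          (fun x y h => by omega)]
        have := Finset.card_filter_add_card_filter_not (s := A) (p := (· < g))
        simp only [not_lt] at this
        omega
      calc A.card = _ := hcard.symm
        _ ≤ _ := Finset.card_le_card hB
    · have hsub : A ⊆ up A ∩ Finset.Ico (a+1) b := by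
        intro j hj
        have hj2 := hA hj; rw [mem_Ico] at hj2
        have : j ≠ a := fun h => ha (h ▸ hj)
        refine Finset.mem_inter.2 ⟨Finset.mem_union_left _ hj, ?_⟩
        rw [mem_Ico]; omega
      exact Finset.card_le_card hsub


variable (a0 a1 b0 b1 : ℕ)

def m1v (d k : ℕ) : ℕ := min k (n1 a1 b0 b1 d)
def m0v (d k : ℕ) : ℕ := k - n1 a1 b0 b1 d

def ww (d k : ℕ) : ℕ :=
  min (pt b1 (d+1)) (max (ps a1 b0 d + min (m1v a1 b0 b1 d k + 1) (2 * m1v a1 b0 b1 d k))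
    (pq a1 d + min 1 (m0v a1 b0 b1 d k)))

def vv (d k : ℕ) : ℕ :=
  max (pp a0 (d+1)) (pq a1 d + 1 - min (m0v a1 b0 b1 d k + 1) (2 * m0v a1 b0 b1 d k))

set_option maxHeartbeats 4000000 in
lemma shJ_seg (h1 : b0 < a0) (h2 : a1 < b1) (h3 : b1 ≤ a0) (h4 : b0 + b1 ≤ a0 + a1)
    (h5 : a1 + b0 ≤ b1) {d k : ℕ} :
    shJ a0 a1 b0 b1 d (seg a1 b0 b1 d k) =
      Ico (ps a1 b0 (d+1)) (ww a1 b0 b1 d k) ∪ Ico (vv a0 a1 b0 b1 d k) (pq a1 (d+1)) := by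
  ext j
  simp only [shJ, Finset.mem_inter, mem_up, mem_seg, mem_Jd, Finset.mem_union, Finset.mem_Ico]
  simp only [pp, pq, ps, pt, n0, n1, m1v, m0v, ww, vv] at *
  omega

set_option maxHeartbeats 2000000 in
lemma wv_full (h1 : b0 < a0) (h2 : a1 < b1) (h3 : b1 ≤ a0) (h4 : b0 + b1 ≤ a0 + a1)
    (h5 : a1 + b0 ≤ b1) {d k : ℕ} (h : vv a0 a1 b0 b1 d k < pq a1 (d+1)) :
    ww a1 b0 b1 d k = pt b1 (d+1) ∨ pt b1 (d+1) ≤ ps a1 b0 (d+1) := by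
  simp only [pp, pq, ps, pt, n0, n1, m1v, m0v, ww, vv] at *
  omega

set_option maxHeartbeats 2000000 in
lemma Earith_0 {d k : ℕ} (hk : k = 0) :
    (ww a1 b0 b1 d k - ps a1 b0 (d+1)) + (pq a1 (d+1) - vv a0 a1 b0 b1 d k) = 0 := by
  subst hk
  simp only [pp, pq, ps, pt, n0, n1, m1v, m0v, ww, vv] at *
  omega

set_option maxHeartbeats 4000000 in
lemma Earith_I (h1 : b0 < a0) (h2 : a1 < b1) (h3 : b1 ≤ a0) (h4 : b0 + b1 ≤ a0 + a1)
    (h5 : a1 + b0 ≤ b1) {d k : ℕ} (hI : d + 2 ≤ a1 + b0) :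
    (ww a1 b0 b1 d k - ps a1 b0 (d+1)) + (pq a1 (d+1) - vv a0 a1 b0 b1 d k) ≤ k + 1 := by
  simp only [pp, pq, ps, pt, n0, n1, m1v, m0v, ww, vv] at *
  omega

set_option maxHeartbeats 4000000 in
lemma Earith_II (h1 : b0 < a0) (h2 : a1 < b1) (h3 : b1 ≤ a0) (h4 : b0 + b1 ≤ a0 + a1)
    (h5 : a1 + b0 ≤ b1) {d k : ℕ} (hI : ¬ (d + 2 ≤ a1 + b0)) (hg : d + 2 ≤ b1) :
    (ww a1 b0 b1 d k - ps a1 b0 (d+1)) + (pq a1 (d+1) - vv a0 a1 b0 b1 d k) ≤ k := by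
  simp only [pp, pq, ps, pt, n0, n1, m1v, m0v, ww, vv] at *
  omega

set_option maxHeartbeats 4000000 in
lemma Earith_III (h1 : b0 < a0) (h2 : a1 < b1) (h3 : b1 ≤ a0) (h4 : b0 + b1 ≤ a0 + a1)
    (h5 : a1 + b0 ≤ b1) {d k c0 c1 k0 k1 : ℕ} (hI : ¬ (d + 2 ≤ a1 + b0))
    (hg : ¬ (d + 2 ≤ b1))
    (hks : k0 + k1 = k) (hn0 : k0 ≤ pq a1 d - pp a0 d) (hn1 : k1 ≤ pt b1 d - ps a1 b0 d)
    (hc1a : k1 ≤ c1 + 1) (hc1b : k1 = pt b1 d - ps a1 b0 d ∨ k1 ≤ c1)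
    (hc0a : k0 ≤ c0 + 1)
    (hc0b : (d + 2 ≤ a0 ∧ k0 ≤ c0) ∨ (¬ (d + 2 ≤ a0) ∧ (k0 = pq a1 d - pp a0 d ∨ k0 ≤ c0))) :
    (ww a1 b0 b1 d k - ps a1 b0 (d+1)) + (pq a1 (d+1) - vv a0 a1 b0 b1 d k) ≤ c0 + c1 := by
  simp only [pp, pq, ps, pt, n0, n1, m1v, m0v, ww, vv] at *
  omega

lemma card_shJ_seg (h1 : b0 < a0) (h2 : a1 < b1) (h3 : b1 ≤ a0) (h4 : b0 + b1 ≤ a0 + a1)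
    (h5 : a1 + b0 ≤ b1) {d k : ℕ} :
    (shJ a0 a1 b0 b1 d (seg a1 b0 b1 d k)).card =
      (ww a1 b0 b1 d k - ps a1 b0 (d+1)) + (pq a1 (d+1) - vv a0 a1 b0 b1 d k) := by
  rw [shJ_seg a0 a1 b0 b1 h1 h2 h3 h4 h5, card_union_of_disjoint, Nat.card_Ico, Nat.card_Ico]
  rw [Finset.disjoint_left]
  intro j hj hj'
  rw [Finset.mem_Ico] at hj hj'
  have e1 : pq a1 (d+1) ≤ a1 := min_le_left _ _
  have e2 : a1 ≤ ps a1 b0 (d+1) := le_max_left _ _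
  omega

lemma upset_shJ_seg (h1 : b0 < a0) (h2 : a1 < b1) (h3 : b1 ≤ a0) (h4 : b0 + b1 ≤ a0 + a1)
    (h5 : a1 + b0 ≤ b1) {d k : ℕ} :
    UpSet a0 a1 b0 b1 (d+1) (shJ a0 a1 b0 b1 d (seg a1 b0 b1 d k)) := by
  have e1 : pq a1 (d+1) ≤ a1 := min_le_left _ _
  have e2 : a1 ≤ ps a1 b0 (d+1) := le_max_left _ _
  have e3 : ww a1 b0 b1 d k ≤ pt b1 (d+1) := min_le_left _ _
  have e4 : pp a0 (d+1) ≤ vv a0 a1 b0 b1 d k := le_max_left _ _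
  have e5 : vv a0 a1 b0 b1 d k < pq a1 (d+1) →
      ww a1 b0 b1 d k = pt b1 (d+1) ∨ pt b1 (d+1) ≤ ps a1 b0 (d+1) := by
    intro h
    exact wv_full a0 a1 b0 b1 h1 h2 h3 h4 h5 h
  rw [shJ_seg a0 a1 b0 b1 h1 h2 h3 h4 h5]
  constructor
  · intro j hj
    rw [mem_Jd]
    rw [Finset.mem_union, Finset.mem_Ico, Finset.mem_Ico] at hj
    omega
  · intro j hj j' hj' ht
    rw [mem_Jd] at hj'
    unfold tlt at ht
    rw [Finset.mem_union, Finset.mem_Ico, Finset.mem_Ico] at hj ⊢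
    by_cases hvq : vv a0 a1 b0 b1 d k < pq a1 (d+1)
    · have := e5 hvq
      omega
    · omega

lemma upset_shJ_upset (h1 : b0 < a0) (h2 : a1 < b1) (h3 : b1 ≤ a0) (h4 : b0 + b1 ≤ a0 + a1)
    (h5 : a1 + b0 ≤ b1) {d : ℕ} {S : Finset ℕ} (hS : UpSet a0 a1 b0 b1 d S) :
    UpSet a0 a1 b0 b1 (d+1) (shJ a0 a1 b0 b1 d S) := by
  rw [upset_eq_seg a0 a1 b0 b1 hS]
  exact upset_shJ_seg a0 a1 b0 b1 h1 h2 h3 h4 h5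

lemma card_shJ_le (h1 : b0 < a0) (h2 : a1 < b1) (h3 : b1 ≤ a0) (h4 : b0 + b1 ≤ a0 + a1)
    (h5 : a1 + b0 ≤ b1) {d : ℕ} {A S : Finset ℕ} (hA : A ⊆ Jd a0 a1 b0 b1 d)
    (hS : UpSet a0 a1 b0 b1 d S) (hc : S.card = A.card) :
    (shJ a0 a1 b0 b1 d S).card ≤ (shJ a0 a1 b0 b1 d A).card := by
  have hSeq := upset_eq_seg a0 a1 b0 b1 hS
  rw [hc] at hSeq
  subst hSeq
  set k := A.card with hkdef
  have hE := card_shJ_seg a0 a1 b0 b1 h1 h2 h3 h4 h5 (d := d) (k := k)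
  rw [hE]
  set A0 := A.filter (fun j => j < a1) with hA0def
  set A1 := A.filter (fun j => a1 ≤ j) with hA1def
  have hsplitA : A0.card + A1.card = k := by
    have := Finset.card_filter_add_card_filter_not (s := A) (p := fun j => j < a1)
    simp only [not_lt] at this
    rw [hA0def, hA1def]
    exact this
  have hA0sub : A0 ⊆ Finset.Ico (pp a0 d) (pq a1 d) := by
    intro j hj
    rw [hA0def, mem_filter] at hj
    have := hA hj.1
    rw [mem_Jd] at this
    rw [mem_Ico]
    simp only [pp, pq, ps, pt] at *
    omega
  have hA1sub : A1 ⊆ Finset.Ico (ps a1 b0 d) (pt b1 d) := by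
    intro j hj
    rw [hA1def, mem_filter] at hj
    have := hA hj.1
    rw [mem_Jd] at this
    rw [mem_Ico]
    simp only [pp, pq, ps, pt] at *
    omega
  have hk0 : A0.card ≤ pq a1 d - pp a0 d := by
    have := Finset.card_le_card hA0sub
    rwa [Nat.card_Ico] at this
  have hk1 : A1.card ≤ pt b1 d - ps a1 b0 d := by
    have := Finset.card_le_card hA1sub
    rwa [Nat.card_Ico] at this
  have hCsplit : ((shJ a0 a1 b0 b1 d A).filter (fun j => j < a1)).card
      + ((shJ a0 a1 b0 b1 d A).filter (fun j => a1 ≤ j)).card = (shJ a0 a1 b0 b1 d A).card := by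
    have := Finset.card_filter_add_card_filter_not (s := shJ a0 a1 b0 b1 d A)
      (p := fun j => j < a1)
    simp only [not_lt] at this
    exact this
  by_cases hI : d + 2 ≤ a1 + b0
  · rcases Finset.eq_empty_or_nonempty A with rfl | hne
    · have h0 : k = 0 := by rw [hkdef]; simp
      rw [Earith_0 a0 a1 b0 b1 h0]
      exact Nat.zero_le _
    · have hup : up A ⊆ Jd a0 a1 b0 b1 (d+1) := by
        intro j hj
        rw [mem_up] at hj
        rw [mem_Jd]
        have h1' : j ∈ A → (pp a0 d ≤ j ∧ j < pq a1 d) ∨ (ps a1 b0 d ≤ j ∧ j < pt b1 d) := by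
          intro h; have := hA h; rwa [mem_Jd] at this
        have h2' : (1 ≤ j ∧ j - 1 ∈ A) →
            (pp a0 d ≤ j - 1 ∧ j - 1 < pq a1 d) ∨ (ps a1 b0 d ≤ j - 1 ∧ j - 1 < pt b1 d) := by
          intro h; have := hA h.2; rwa [mem_Jd] at this
        rcases hj with h | h
        · have := h1' h
          simp only [pp, pq, ps, pt] at *
          omega
        · have := h2' h
          have hge := h.1
          simp only [pp, pq, ps, pt] at *
          omega
      have heq : shJ a0 a1 b0 b1 d A = up A := by
        rw [shJ, Finset.inter_eq_left]
        exact hup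
      have hcup := card_up hne
      have hEI := Earith_I a0 a1 b0 b1 h1 h2 h3 h4 h5 (d := d) (k := k) hI
      rw [heq]
      omega
  · have hC1sub : up A1 ∩ Finset.Ico (ps a1 b0 d + 1) (pt b1 (d+1))
        ⊆ (shJ a0 a1 b0 b1 d A).filter (fun j => a1 ≤ j) := by
      intro j hj
      rw [Finset.mem_inter, mem_up, mem_Ico] at hj
      obtain ⟨hj1, hj2⟩ := hj
      have hjA : j ∈ up A := by
        rw [mem_up]
        rcases hj1 with h | h
        · exact Or.inl (Finset.mem_of_mem_filter j (hA1def ▸ h))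
        · exact Or.inr ⟨h.1, Finset.mem_of_mem_filter _ (hA1def ▸ h.2)⟩
      rw [mem_filter, shJ, Finset.mem_inter, mem_Jd]
      refine ⟨⟨hjA, ?_⟩, ?_⟩
      · right
        simp only [pp, pq, ps, pt] at *
        omega
      · simp only [pp, pq, ps, pt] at *
        omega
    have hC0sub : up A0 ∩ Finset.Ico (pp a0 (d+1)) (pq a1 (d+1))
        ⊆ (shJ a0 a1 b0 b1 d A).filter (fun j => j < a1) := by
      intro j hj
      rw [Finset.mem_inter, mem_up, mem_Ico] at hj
      obtain ⟨hj1, hj2⟩ := hj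
      have hjA : j ∈ up A := by
        rw [mem_up]
        rcases hj1 with h | h
        · exact Or.inl (Finset.mem_of_mem_filter j (hA0def ▸ h))
        · exact Or.inr ⟨h.1, Finset.mem_of_mem_filter _ (hA0def ▸ h.2)⟩
      rw [mem_filter, shJ, Finset.mem_inter, mem_Jd]
      refine ⟨⟨hjA, ?_⟩, ?_⟩
      · left
        simp only [pp, pq, ps, pt] at *
        omega
      · simp only [pp, pq, ps, pt] at *
        omega
    have hcC1 := Finset.card_le_card hC1sub
    have hcC0 := Finset.card_le_card hC0sub
    by_cases hgrow : d + 2 ≤ b1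
    · have himg : A1.image (· + 1) ⊆ up A1 ∩ Finset.Ico (ps a1 b0 d + 1) (pt b1 (d+1)) := by
        intro j hj
        rw [mem_image] at hj
        obtain ⟨i, hi, rfl⟩ := hj
        have := hA1sub hi
        rw [mem_Ico] at this
        rw [Finset.mem_inter, mem_Ico]
        refine ⟨Finset.mem_union_right _ (Finset.mem_image.2 ⟨i, hi, rfl⟩), ?_⟩
        simp only [pp, pq, ps, pt] at *
        omega
      have hc1 : A1.card ≤ ((shJ a0 a1 b0 b1 d A).filter (fun j => a1 ≤ j)).card := by
        have h' := Finset.card_le_card himg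
        rw [Finset.card_image_of_injective _ (fun x y h => by omega)] at h'
        omega
      have hneut : A0 ⊆ up A0 ∩ Finset.Ico (pp a0 (d+1)) (pq a1 (d+1)) := by
        intro j hj
        have := hA0sub hj
        rw [mem_Ico] at this
        rw [Finset.mem_inter, mem_Ico]
        refine ⟨Finset.mem_union_left _ hj, ?_⟩
        simp only [pp, pq, ps, pt] at *
        omega
      have hc0 : A0.card ≤ ((shJ a0 a1 b0 b1 d A).filter (fun j => j < a1)).card := by
        have h' := Finset.card_le_card hneut
        omega
      have hEII := Earith_II a0 a1 b0 b1 h1 h2 h3 h4 h5 (d := d) (k := k) hI hgrow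
      omega
    · have hpt : pt b1 (d+1) = pt b1 d := by simp only [pt]; omega
      rw [hpt] at hcC1
      have hs1 := card_shrink hA1sub
      have hc1a : A1.card ≤ ((shJ a0 a1 b0 b1 d A).filter (fun j => a1 ≤ j)).card + 1 := by
        omega
      have hc1b : A1.card = pt b1 d - ps a1 b0 d ∨
          A1.card ≤ ((shJ a0 a1 b0 b1 d A).filter (fun j => a1 ≤ j)).card := by
        by_cases hfull : A1 = Finset.Ico (ps a1 b0 d) (pt b1 d)
        · left; rw [hfull, Nat.card_Ico]
        · right; have := hs1.2 hfull; omega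
      have hc0ab : A0.card ≤ ((shJ a0 a1 b0 b1 d A).filter (fun j => j < a1)).card + 1 ∧
          ((d + 2 ≤ a0 ∧ A0.card ≤ ((shJ a0 a1 b0 b1 d A).filter (fun j => j < a1)).card) ∨
           (¬ (d + 2 ≤ a0) ∧ (A0.card = pq a1 d - pp a0 d ∨
             A0.card ≤ ((shJ a0 a1 b0 b1 d A).filter (fun j => j < a1)).card))) := by
        by_cases hc3 : d + 2 ≤ a0
        · have hneut : A0 ⊆ up A0 ∩ Finset.Ico (pp a0 (d+1)) (pq a1 (d+1)) := by
            intro j hj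
            have := hA0sub hj
            rw [mem_Ico] at this
            rw [Finset.mem_inter, mem_Ico]
            refine ⟨Finset.mem_union_left _ hj, ?_⟩
            simp only [pp, pq, ps, pt] at *
            omega
          have h' := Finset.card_le_card hneut
          exact ⟨by omega, Or.inl ⟨hc3, by omega⟩⟩
        · have hIco : Finset.Ico (pp a0 (d+1)) (pq a1 (d+1))
              = Finset.Ico (pp a0 d + 1) (pq a1 d) := by
            have e1 : pp a0 (d+1) = pp a0 d + 1 := by simp only [pp]; omega
            have e2 : pq a1 (d+1) = pq a1 d := by simp only [pq]; omega
            rw [e1, e2]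
          rw [hIco] at hcC0
          have hs0 := card_shrink hA0sub
          refine ⟨by omega, Or.inr ⟨hc3, ?_⟩⟩
          by_cases hfull : A0 = Finset.Ico (pp a0 d) (pq a1 d)
          · left; rw [hfull, Nat.card_Ico]
          · right; have := hs0.2 hfull; omega
      have hE3 := Earith_III a0 a1 b0 b1 h1 h2 h3 h4 h5 hI hgrow hsplitA hk0 hk1
        hc1a hc1b hc0ab.1 hc0ab.2
      omega

end HeartN

namespace HeartT

variable {a0 a1 b0 b1 : ℕ}

def jj (x : Heart a0 a1 b0 b1) : ℕ := x.1.2.val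
def ii (x : Heart a0 a1 b0 b1) : ℕ := x.1.1.val

lemma rank_eq (x : Heart a0 a1 b0 b1) : heartRank x = ii x + jj x := rfl

lemma mem_shadow {X : Finset (Heart a0 a1 b0 b1)} {b : Heart a0 a1 b0 b1} :
    b ∈ _root_.shadow X ↔ ∃ a ∈ X, a ⋖ b := by
  unfold _root_.shadow
  simp

lemma prop (x : Heart a0 a1 b0 b1) :
    (ii x < a0 ∧ jj x < a1) ∨ (ii x < b0 ∧ jj x < b1) := x.2

lemma heart_ext {x y : Heart a0 a1 b0 b1} (hi : ii x = ii y) (hj : jj x = jj y) : x = y := by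
  apply Subtype.ext
  apply Prod.ext <;> apply Fin.ext <;> assumption

def mk (i j : ℕ) (h : (i < a0 ∧ j < a1) ∨ (i < b0 ∧ j < b1)) : Heart a0 a1 b0 b1 :=
  ⟨(⟨i, by omega⟩, ⟨j, by omega⟩), h⟩

@[simp] lemma ii_mk {i j : ℕ} (h) : ii (mk (a0 := a0) (a1 := a1) (b0 := b0) (b1 := b1) i j h) = i := rfl
@[simp] lemma jj_mk {i j : ℕ} (h) : jj (mk (a0 := a0) (a1 := a1) (b0 := b0) (b1 := b1) i j h) = j := rfl

lemma le_iff {x y : Heart a0 a1 b0 b1} : x ≤ y ↔ ii x ≤ ii y ∧ jj x ≤ jj y := by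
  rw [← Subtype.coe_le_coe, Prod.le_def]
  rfl

lemma lt_iff {x y : Heart a0 a1 b0 b1} :
    x < y ↔ (ii x ≤ ii y ∧ jj x ≤ jj y) ∧ ¬(ii x = ii y ∧ jj x = jj y) := by
  rw [lt_iff_le_and_ne, le_iff]
  constructor
  · rintro ⟨h1, h2⟩
    exact ⟨h1, fun h => h2 (heart_ext h.1 h.2)⟩
  · rintro ⟨h1, h2⟩
    exact ⟨h1, fun h => h2 (by subst h; exact ⟨rfl, rfl⟩)⟩

lemma rank_lt_of_lt {x y : Heart a0 a1 b0 b1} (h : x < y) : heartRank x < heartRank y := by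
  rw [lt_iff] at h
  rw [rank_eq, rank_eq]
  omega

lemma cov_iff {x y : Heart a0 a1 b0 b1} :
    x ⋖ y ↔ (ii y = ii x + 1 ∧ jj y = jj x) ∨ (ii y = ii x ∧ jj y = jj x + 1) := by
  constructor
  · rintro ⟨hlt, hmid⟩
    have hle := (lt_iff.1 hlt).1
    have hne := (lt_iff.1 hlt).2
    by_contra hcon
    push_neg at hcon
    -- rank gap ≥ 2
    have hrank : heartRank x + 2 ≤ heartRank y := by
      rw [rank_eq, rank_eq]
      omega
    rcases Nat.lt_or_ge (ii x) (ii y) with hii | hii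
    · have hp : (ii x + 1 < a0 ∧ jj x < a1) ∨ (ii x + 1 < b0 ∧ jj x < b1) := by
        have := prop y
        omega
      have h1 : x < mk (ii x + 1) (jj x) hp := by
        rw [lt_iff]; simp
      have h2 : mk (ii x + 1) (jj x) hp < y := by
        rw [lt_iff]; simp
        constructor
        · constructor <;> omega
        · intro h; rw [rank_eq, rank_eq] at hrank; omega
      exact hmid h1 h2
    · have hjj : jj x + 2 ≤ jj y := by rw [rank_eq, rank_eq] at hrank; omega
      have hp : (ii x < a0 ∧ jj x + 1 < a1) ∨ (ii x < b0 ∧ jj x + 1 < b1) := by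
        have := prop y
        omega
      have h1 : x < mk (ii x) (jj x + 1) hp := by
        rw [lt_iff]; simp
      have h2 : mk (ii x) (jj x + 1) hp < y := by
        rw [lt_iff]; simp
        constructor
        · constructor <;> omega
        · intro h; omega
      exact hmid h1 h2
  · intro h
    constructor
    · rw [lt_iff]
      constructor
      · constructor <;> omega
      · rintro ⟨h1, h2⟩; omega
    · intro c h1 h2
      have r1 := rank_lt_of_lt h1
      have r2 := rank_lt_of_lt h2
      simp only [rank_eq] at r1 r2 ⊢
      omega

lemma rank_cov {x y : Heart a0 a1 b0 b1} (h : x ⋖ y) : heartRank y = heartRank x + 1 := by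
  rw [cov_iff] at h
  rw [rank_eq, rank_eq]
  omega

noncomputable def levH (a0 a1 b0 b1 d : ℕ) : Finset (Heart a0 a1 b0 b1) :=
  Finset.univ.filter (fun x => heartRank x = d)

noncomputable def js (X : Finset (Heart a0 a1 b0 b1)) : Finset ℕ := X.image jj

lemma jj_injOn {d : ℕ} {X : Finset (Heart a0 a1 b0 b1)}
    (hX : ∀ x ∈ X, heartRank x = d) : Set.InjOn jj (X : Set (Heart a0 a1 b0 b1)) := by
  intro x hx y hy hxy
  have h1 := hX x hx
  have h2 := hX y hy
  rw [rank_eq] at h1 h2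
  exact heart_ext (by omega) hxy

lemma js_card {d : ℕ} {X : Finset (Heart a0 a1 b0 b1)}
    (hX : ∀ x ∈ X, heartRank x = d) : (js X).card = X.card :=
  Finset.card_image_of_injOn (jj_injOn hX)

lemma jj_mem_Jd (h1 : b0 < a0) {d : ℕ} {x : Heart a0 a1 b0 b1} (hx : heartRank x = d) :
    jj x ∈ HeartN.Jd a0 a1 b0 b1 d := by
  rw [HeartN.mem_Jd]
  have hp := prop x
  rw [rank_eq] at hx
  simp only [HeartN.pp, HeartN.pq, HeartN.ps, HeartN.pt]
  omega

lemma exists_of_mem_Jd {d j : ℕ} (hj : j ∈ HeartN.Jd a0 a1 b0 b1 d) :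
    ∃ x : Heart a0 a1 b0 b1, heartRank x = d ∧ jj x = j := by
  rw [HeartN.mem_Jd] at hj
  simp only [HeartN.pp, HeartN.pq, HeartN.ps, HeartN.pt] at hj
  have hp : (d - j < a0 ∧ j < a1) ∨ (d - j < b0 ∧ j < b1) := by omega
  refine ⟨mk (d - j) j hp, ?_, rfl⟩
  rw [rank_eq]
  simp only [ii_mk, jj_mk]
  omega

lemma js_subset_Jd (h1 : b0 < a0) {d : ℕ} {X : Finset (Heart a0 a1 b0 b1)}
    (hX : ∀ x ∈ X, heartRank x = d) : js X ⊆ HeartN.Jd a0 a1 b0 b1 d := by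
  intro j hj
  rw [js, Finset.mem_image] at hj
  obtain ⟨x, hx, rfl⟩ := hj
  exact jj_mem_Jd h1 (hX x hx)

lemma shadow_rank {d : ℕ} {X : Finset (Heart a0 a1 b0 b1)}
    (hX : ∀ x ∈ X, heartRank x = d) : ∀ b ∈ shadow X, heartRank b = d + 1 := by
  intro b hb
  rw [mem_shadow] at hb
  obtain ⟨a, ha, hab⟩ := hb
  rw [rank_cov hab, hX a ha]

lemma js_shadow (h1 : b0 < a0) {d : ℕ} {X : Finset (Heart a0 a1 b0 b1)}
    (hX : ∀ x ∈ X, heartRank x = d) :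
    js (shadow X) = HeartN.shJ a0 a1 b0 b1 d (js X) := by
  ext j
  constructor
  · intro hj
    rw [js, Finset.mem_image] at hj
    obtain ⟨b, hb, rfl⟩ := hj
    have hbr := shadow_rank hX b hb
    rw [mem_shadow] at hb
    obtain ⟨a, ha, hab⟩ := hb
    rw [HeartN.shJ, Finset.mem_inter]
    refine ⟨?_, jj_mem_Jd h1 hbr⟩
    rw [HeartN.mem_up]
    rw [cov_iff] at hab
    rcases hab with ⟨hi, hjx⟩ | ⟨hi, hjx⟩
    · left; rw [hjx]; exact Finset.mem_image.2 ⟨a, ha, rfl⟩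
    · right
      constructor
      · omega
      · have : jj b - 1 = jj a := by omega
        rw [this]
        exact Finset.mem_image.2 ⟨a, ha, rfl⟩
  · intro hj
    rw [HeartN.shJ, Finset.mem_inter] at hj
    obtain ⟨hup, hJd⟩ := hj
    obtain ⟨b, hbr, hbj⟩ := exists_of_mem_Jd hJd
    rw [HeartN.mem_up] at hup
    have hbmem : b ∈ shadow X := by
      rw [mem_shadow]
      rcases hup with hj' | ⟨hj1, hj'⟩
      · rw [js, Finset.mem_image] at hj'
        obtain ⟨a, ha, haj⟩ := hj'
        refine ⟨a, ha, ?_⟩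
        rw [cov_iff]
        left
        have hra := hX a ha
        rw [rank_eq] at hra hbr
        omega
      · rw [js, Finset.mem_image] at hj'
        obtain ⟨a, ha, haj⟩ := hj'
        refine ⟨a, ha, ?_⟩
        rw [cov_iff]
        right
        have hra := hX a ha
        rw [rank_eq] at hra hbr
        omega
    rw [js, Finset.mem_image]
    exact ⟨b, hbmem, hbj⟩

lemma twist_iff_tlt {x y : Heart a0 a1 b0 b1} (hx : heartRank x = heartRank y) :
    heartTwistLt a1 x y ↔ HeartN.tlt a1 (jj x) (jj y) := by
  unfold heartTwistLt HeartN.tlt jj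
  omega

lemma initseg_upset (h1 : b0 < a0) {d : ℕ} {S : Finset (Heart a0 a1 b0 b1)}
    (hS : IsInitSeg heartRank (heartTwistLt a1) d S) :
    HeartN.UpSet a0 a1 b0 b1 d (js S) := by
  refine ⟨js_subset_Jd h1 hS.1, ?_⟩
  intro j hj j' hj' ht
  rw [js, Finset.mem_image] at hj
  obtain ⟨x, hx, rfl⟩ := hj
  obtain ⟨y, hyr, hyj⟩ := exists_of_mem_Jd hj'
  have hxy : heartTwistLt a1 x y := by
    rw [twist_iff_tlt (by rw [hS.1 x hx, hyr])]
    rw [hyj]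
    exact ht
  have hyS := hS.2 x hx y hyr hxy
  rw [js, Finset.mem_image]
  exact ⟨y, hyS, hyj⟩

end HeartT

/-- In the case b0 < a0, a1 < b1, a0 ≥ b1, a0 + a1 ≥ b0 + b1 and a1 + b0 ≤ b1, the
heart-shaped poset is Macaulay with respect to the twist order with y > x. -/
theorem stmt17 (a0 a1 b0 b1 : ℕ) (h1 : b0 < a0) (h2 : a1 < b1) (h3 : b1 ≤ a0)
    (h4 : b0 + b1 ≤ a0 + a1) (h5 : a1 + b0 ≤ b1) :
    MacaulayWith (heartRank (a0 := a0) (a1 := a1) (b0 := b0) (b1 := b1))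
      (heartTwistLt a1) := by
  open HeartT in
  refine ⟨⟨fun x y => ?_⟩, ⟨fun x y z hxy hyz => ?_⟩, ⟨fun x hx => ?_⟩, ?_, ?_⟩
  · -- trichotomous
    by_cases hr : heartRank x = heartRank y
    · by_cases hj : HeartT.jj x = HeartT.jj y
      · intro _ _
        apply HeartT.heart_ext
        · rw [HeartT.rank_eq, HeartT.rank_eq] at hr; omega
        · exact hj
      · have : heartTwistLt a1 x y ∨ heartTwistLt a1 y x := by
          unfold heartTwistLt
          unfold HeartT.jj at hj
          omega
        tauto
    · have : heartTwistLt a1 x y ∨ heartTwistLt a1 y x := by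
        unfold heartTwistLt
        omega
      tauto
  · -- trans
    unfold heartTwistLt at *
    omega
  · -- irrefl
    unfold heartTwistLt at hx
    omega
  · -- shadow minimality
    intro d A S hA hS hcard
    have hSlev : ∀ x ∈ S, heartRank x = d := hS.1
    have e1 : (shadow S).card = (HeartN.shJ a0 a1 b0 b1 d (HeartT.js S)).card := by
      rw [← HeartT.js_shadow h1 hSlev, HeartT.js_card (HeartT.shadow_rank hSlev)]
    have e2 : (shadow A).card = (HeartN.shJ a0 a1 b0 b1 d (HeartT.js A)).card := by
      rw [← HeartT.js_shadow h1 hA, HeartT.js_card (HeartT.shadow_rank hA)]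
    rw [e1, e2]
    apply HeartN.card_shJ_le a0 a1 b0 b1 h1 h2 h3 h4 h5
    · exact HeartT.js_subset_Jd h1 hA
    · exact HeartT.initseg_upset h1 hS
    · rw [HeartT.js_card hSlev, HeartT.js_card hA, hcard]
  · -- shadow of initial segment
    intro d S hS
    have hSlev : ∀ x ∈ S, heartRank x = d := hS.1
    refine ⟨HeartT.shadow_rank hSlev, ?_⟩
    intro x hx y hyr hxy
    have hup : HeartN.UpSet a0 a1 b0 b1 (d+1) (HeartT.js (shadow S)) := by
      rw [HeartT.js_shadow h1 hSlev]
      exact HeartN.upset_shJ_upset a0 a1 b0 b1 h1 h2 h3 h4 h5 (HeartT.initseg_upset h1 hS)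
    have hxj : HeartT.jj x ∈ HeartT.js (shadow S) :=
      Finset.mem_image.2 ⟨x, hx, rfl⟩
    have hyj : HeartT.jj y ∈ HeartN.Jd a0 a1 b0 b1 (d+1) := HeartT.jj_mem_Jd h1 hyr
    have ht : HeartN.tlt a1 (HeartT.jj x) (HeartT.jj y) := by
      rw [← HeartT.twist_iff_tlt (by rw [HeartT.shadow_rank hSlev x hx, hyr])]
      exact hxy
    have := hup.2 _ hxj _ hyj ht
    rw [HeartT.js, Finset.mem_image] at this
    obtain ⟨b, hb, hbj⟩ := this
    have : b = y := HeartT.heart_ext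
      (by have := HeartT.shadow_rank hSlev b hb
          rw [HeartT.rank_eq] at this hyr; omega)
      hbj
    rwa [← this]
end

section
/- Let P be the monomial poset of K[y,z]/(y^3, y^2 z, y z^2, z^3) (the poset {(0,0),(1,0),(0,1),(2,0),(1,1),(0,2)} under componentwise order) and let Q be the chain {0,1}. Then the cartesian product P x Q is not a Macaulay poset. -/
open Finset

variable {α : Type*}

-- auxiliary
abbrev P19 := {p : Fin 3 × Fin 3 // p.1.val + p.2.val ≤ 2} × Fin 2

instance : @DecidableRel P19 P19 (· < ·) := fun a b =>
  decidable_of_iff (a ≤ b ∧ ¬ b ≤ a) lt_iff_le_not_ge.symm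
instance : @DecidableRel P19 P19 (· ⋖ ·) := fun a b =>
  decidable_of_iff (a < b ∧ ∀ c, a < c → ¬ c < b) Iff.rfl

def r19 : P19 → ℕ := fun x => x.1.1.1.val + x.1.1.2.val + x.2.val

def e19 (a b : Fin 3) (h : a.val + b.val ≤ 2) (c : Fin 2) : P19 := (⟨(a, b), h⟩, c)

lemma mem_shadow19 {A : Finset P19} {b : P19} :
    b ∈ _root_.shadow A ↔ ∃ a ∈ A, a ⋖ b := by
  classical
  rw [_root_.shadow]
  simp only [Finset.mem_filter, Finset.mem_univ, true_and]

lemma shadow_eq19 {A T : Finset P19} (h : ∀ b : P19, (∃ a ∈ A, a ⋖ b) ↔ b ∈ T) :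
    _root_.shadow A = T := by
  ext b; rw [mem_shadow19]; exact h b

lemma exists_top19 (lt : P19 → P19 → Prop)
    (trich : ∀ a b, lt a b ∨ a = b ∨ lt b a)
    (htrans : ∀ a b c, lt a b → lt b c → lt a c)
    (s : Finset P19) (hs : s.Nonempty) :
    ∃ m ∈ s, ∀ b ∈ s, b ≠ m → lt b m := by
  classical
  induction s using Finset.induction with
  | empty => exact absurd hs (by simp)
  | @insert a s hnot ih =>
    rcases s.eq_empty_or_nonempty with rfl | hne
    · exact ⟨a, by simp, by simp⟩
    · obtain ⟨m, hm, hmax⟩ := ih hne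
      rcases trich a m with h | h | h
      · refine ⟨m, by simp [hm], ?_⟩
        intro b hb hbm
        rcases Finset.mem_insert.mp hb with rfl | hb
        · exact h
        · exact hmax b hb hbm
      · exact absurd (h ▸ hm) hnot
      · refine ⟨a, by simp, ?_⟩
        intro b hb hba
        rcases Finset.mem_insert.mp hb with rfl | hb
        · exact absurd rfl hba
        · by_cases hbm : b = m
          · exact hbm ▸ h
          · exact htrans b m a (hmax b hb hbm) h

def E100 : P19 := e19 1 0 (by decide) 0
def E010 : P19 := e19 0 1 (by decide) 0
def E001 : P19 := e19 0 0 (by decide) 1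
def E200 : P19 := e19 2 0 (by decide) 0
def E101 : P19 := e19 1 0 (by decide) 1
def E011 : P19 := e19 0 1 (by decide) 1

/-- The product of the monomial poset of K[y,z]/(y,z)^3 with the chain {0,1} is not
Macaulay. -/
theorem stmt19 :
    ¬ IsMacaulay (fun x : {p : Fin 3 × Fin 3 // p.1.val + p.2.val ≤ 2} × Fin 2 =>
        x.1.1.1.val + x.1.1.2.val + x.2.val) := by
  rintro ⟨lt, ⟨trich⟩, ⟨htrans⟩, ⟨hirr⟩, hmin, hshad⟩
  have trich : ∀ a b : P19, lt a b ∨ a = b ∨ lt b a := fun a b => by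
    have := trich a b; tauto
  have hinit : ∀ d (m : P19), r19 m = d → (∀ b, r19 b = d → b ≠ m → lt b m) →
      IsInitSeg r19 lt d {m} := by
    intro d m hm hmax
    refine ⟨by simpa using hm, ?_⟩
    intro a ha b hb hab
    simp only [Finset.mem_singleton] at ha ⊢
    subst ha
    by_contra hbm
    exact hirr a (htrans _ _ _ hab (hmax b hb hbm))
  -- shadow computations
  have sh001 : _root_.shadow ({E001} : Finset P19) = {E101, E011} :=
    shadow_eq19 (by decide)
  have sh100 : (_root_.shadow ({E100} : Finset P19)).card = 3 := by
    rw [shadow_eq19 (T := {e19 2 0 (by decide) 0, e19 1 1 (by decide) 0, e19 1 0 (by decide) 1})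
      (by decide)]
    decide
  have sh010 : (_root_.shadow ({E010} : Finset P19)).card = 3 := by
    rw [shadow_eq19 (T := {e19 1 1 (by decide) 0, e19 0 2 (by decide) 0, e19 0 1 (by decide) 1})
      (by decide)]
    decide
  have sh200 : (_root_.shadow ({E200} : Finset P19)).card = 1 := by
    rw [shadow_eq19 (T := {e19 2 0 (by decide) 1}) (by decide)]
    decide
  have sh101 : (_root_.shadow ({E101} : Finset P19)).card = 2 := by
    rw [shadow_eq19 (T := {e19 2 0 (by decide) 1, e19 1 1 (by decide) 1}) (by decide)]
    decide
  have sh011 : (_root_.shadow ({E011} : Finset P19)).card = 2 := by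
    rw [shadow_eq19 (T := {e19 1 1 (by decide) 1, e19 0 2 (by decide) 1}) (by decide)]
    decide
  -- lt-maximum of level 1
  obtain ⟨m₁, hm₁mem, hm₁max⟩ := exists_top19 lt trich htrans
    (Finset.univ.filter (fun x => r19 x = 1)) ⟨E001, by decide⟩
  rw [Finset.mem_filter] at hm₁mem
  have hm₁rank : r19 m₁ = 1 := hm₁mem.2
  have hm₁max' : ∀ b, r19 b = 1 → b ≠ m₁ → lt b m₁ := fun b hb hne =>
    hm₁max b (Finset.mem_filter.mpr ⟨Finset.mem_univ b, hb⟩) hne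
  have hinit1 : IsInitSeg r19 lt 1 {m₁} := hinit 1 m₁ hm₁rank hm₁max'
  have hle1 : (_root_.shadow ({m₁} : Finset P19)).card ≤
      (_root_.shadow ({E001} : Finset P19)).card :=
    hmin 1 {E001} {m₁}
      (by intro x hx
          simp only [Finset.mem_singleton] at hx
          subst hx
          decide)
      hinit1 (by simp)
  rw [sh001] at hle1
  have hcard2 : ({E101, E011} : Finset P19).card ≤ 2 :=
    (Finset.card_insert_le _ _).trans (by simp)
  have hle1' : (_root_.shadow ({m₁} : Finset P19)).card ≤ 2 := hle1.trans hcard2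
  -- m₁ must be E001
  have hclass1 : ∀ m : P19, r19 m = 1 → m = E100 ∨ m = E010 ∨ m = E001 := by decide
  have hm₁ : m₁ = E001 := by
    rcases hclass1 m₁ hm₁rank with h | h | h
    · rw [h, sh100] at hle1'; omega
    · rw [h, sh010] at hle1'; omega
    · exact h
  -- shadow of the initial segment {m₁} is an initial segment of level 2
  have hTinit : IsInitSeg r19 lt 2 (_root_.shadow ({m₁} : Finset P19)) := hshad 1 {m₁} hinit1
  rw [hm₁, sh001] at hTinit
  -- lt-maximum of level 2
  obtain ⟨m₂, hm₂mem, hm₂max⟩ := exists_top19 lt trich htrans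
    (Finset.univ.filter (fun x => r19 x = 2)) ⟨E200, by decide⟩
  rw [Finset.mem_filter] at hm₂mem
  have hm₂rank : r19 m₂ = 2 := hm₂mem.2
  have hm₂max' : ∀ b, r19 b = 2 → b ≠ m₂ → lt b m₂ := fun b hb hne =>
    hm₂max b (Finset.mem_filter.mpr ⟨Finset.mem_univ b, hb⟩) hne
  have hinit2 : IsInitSeg r19 lt 2 {m₂} := hinit 2 m₂ hm₂rank hm₂max'
  have hle2 : (_root_.shadow ({m₂} : Finset P19)).card ≤
      (_root_.shadow ({E200} : Finset P19)).card :=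
    hmin 2 {E200} {m₂}
      (by intro x hx
          simp only [Finset.mem_singleton] at hx
          subst hx
          decide)
      hinit2 (by simp)
  rw [sh200] at hle2
  -- m₂ belongs to the initial segment {E101, E011}
  have hm₂T : m₂ ∈ ({E101, E011} : Finset P19) := by
    by_cases h : m₂ = E101
    · rw [h]; exact Finset.mem_insert_self _ _
    · exact hTinit.2 E101 (Finset.mem_insert_self _ _) m₂ hm₂rank
        (hm₂max' E101 (by decide) (fun he => h he.symm))
  -- but both elements have shadow of size 2 > 1
  rcases Finset.mem_insert.mp hm₂T with h | h
  · rw [h, sh101] at hle2; omega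
  · rw [Finset.mem_singleton] at h; rw [h, sh011] at hle2; omega
end
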